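/- arXiv:1510.08732 — 5 statements merged into one kernel-verified Lean document; each statement's English description precedes it below -/
import Mathlib

section
/- Let r ≥ 1 and let l₁ < ⋯ < l_p = r and τ₁ < ⋯ < τ_p = r be indices in {1,…,r}. Let Θ_r(l;τ) be the set of permutations μ of {1,…,r} satisfying: (Rule 1) μ(l_i) < μ(l_{i+1}) for all i; (Rule 2) μ(y) < μ(y') whenever y < y' and μ(y), μ(y') lie in the same block I_i of the partition I₁ = {1,…,μ(l₁)}, I_i = {μ(l_{i-1})+1,…,μ(l_i)}; and μ(l_i) = τ_i for all i. Let Ξ_r(l;τ) be the set of permutations ρ of {1,…,r} satisfying: (Rule 4) ρ(τ_i) < ρ(τ_j) for i < j; (Rule 5) ρ(y) < ρ(y') whenever y < y' and y, y' lie in the same block J_i = {τ_{i-1}+1,…,τ_i} (with τ₀ = 0); and ρ(τ_i) = l_i for all i. Then Ξ_r(l;τ) = {ρ : ρ⁻¹ ∈ Θ_r(l;τ)}. -/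
/-- The set `Θ_r(l;τ)` of permutations `μ` of `{1,…,r}` satisfying Rule 1, Rule 2
(with blocks `I_i` determined by the values `μ(l_i)`), and `μ(l_i) = τ_i`.
Two elements lie in the same block `I_i` iff they compare the same way
(`≤`) with every `μ(l_i)`. -/
def ThetaSet (r p : ℕ) (l τ : Fin p → Fin r) : Set (Equiv.Perm (Fin r)) :=
  {μ | (StrictMono fun i => μ (l i)) ∧
    (∀ y y' : Fin r, y < y' → (∀ i, μ y ≤ μ (l i) ↔ μ y' ≤ μ (l i)) → μ y < μ y') ∧
    (∀ i, μ (l i) = τ i)}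

/-- The set `Ξ_r(l;τ)` of permutations `ρ` of `{1,…,r}` satisfying Rule 4, Rule 5
(with blocks `J_i = {τ_{i-1}+1,…,τ_i}`), and `ρ(τ_i) = l_i`. -/
def XiSet (r p : ℕ) (l τ : Fin p → Fin r) : Set (Equiv.Perm (Fin r)) :=
  {ρ | (StrictMono fun i => ρ (τ i)) ∧
    (∀ y y' : Fin r, y < y' → (∀ i, y ≤ τ i ↔ y' ≤ τ i) → ρ y < ρ y') ∧
    (∀ i, ρ (τ i) = l i)}

/-- Proposition 2.1: if at least one of `Ξ_r(l;τ)`, `Θ_r(l;τ)` is nonempty, then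
`Ξ_r(l;τ) = {ρ : ρ⁻¹ ∈ Θ_r(l;τ)}`. -/
theorem xiSet_eq_inv_thetaSet (r p : ℕ) (hr : 0 < r) (hp : 0 < p)
    (l τ : Fin p → Fin r) (hl : StrictMono l) (hτ : StrictMono τ)
    (hltop : (l ⟨p - 1, Nat.sub_lt hp one_pos⟩ : ℕ) + 1 = r)
    (hτtop : (τ ⟨p - 1, Nat.sub_lt hp one_pos⟩ : ℕ) + 1 = r)
    (hne : (XiSet r p l τ).Nonempty ∨ (ThetaSet r p l τ).Nonempty) :
    XiSet r p l τ = {ρ : Equiv.Perm (Fin r) | ρ⁻¹ ∈ ThetaSet r p l τ} := by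
  ext ρ
  simp only [XiSet, ThetaSet, Set.mem_setOf_eq]
  constructor
  · rintro ⟨h1, h2, h3⟩
    have hinv : ∀ i, ρ⁻¹ (l i) = τ i := fun i => by
      rw [← h3 i, Equiv.Perm.coe_inv, Equiv.symm_apply_apply]
    refine ⟨?_, ?_, hinv⟩
    · intro i j hij
      simpa only [hinv] using hτ hij
    · intro y y' hyy hiff
      rcases lt_trichotomy (ρ⁻¹ y) (ρ⁻¹ y') with h | h | h
      · exact h
      · exact absurd (ρ⁻¹.injective h) (by rintro rfl; exact lt_irrefl _ hyy)
      · have := h2 _ _ h (fun i => by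
          have := (hiff i).symm
          rwa [hinv] at this)
        simp only [Equiv.Perm.coe_inv, Equiv.apply_symm_apply] at this
        exact absurd hyy (not_lt.mpr this.le)
  · rintro ⟨h1, h2, h3⟩
    have hρτ : ∀ i, ρ (τ i) = l i := fun i => by
      rw [← h3 i, Equiv.Perm.coe_inv, Equiv.apply_symm_apply]
    refine ⟨?_, ?_, hρτ⟩
    · intro i j hij
      simpa only [hρτ] using hl hij
    · intro y y' hyy hiff
      rcases lt_trichotomy (ρ y) (ρ y') with h | h | h
      · exact h
      · exact absurd (ρ.injective h) (by rintro rfl; exact lt_irrefl _ hyy)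
      · have := h2 (ρ y') (ρ y) h (fun i => by
          rw [h3, Equiv.Perm.coe_inv, Equiv.symm_apply_apply, Equiv.symm_apply_apply]
          exact (hiff i).symm)
        simp only [Equiv.Perm.coe_inv, Equiv.symm_apply_apply] at this
        exact absurd hyy (not_lt.mpr this.le)
end

section
/- Let μ be a permutation of {1,…,r} such that μ(l_i) < μ(l_{i+1}) for all i (Rule 1), and such that μ(y) < μ(y') whenever y < y' and μ(y), μ(y') lie in the same block of the partition I₁ = {1,…,μ(l₁)}, I_i = {μ(l_{i-1})+1,…,μ(l_i)} for i = 2,…,p (Rule 2). Then μ also satisfies Rule 3: μ(l_{i-1}) < μ(y) whenever l_{i-1} < y < l_i. -/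
/-- Lemma 4.1: a permutation `μ` of `{1,…,r}` satisfying Rule 1 and Rule 2
(with blocks `I_i` determined by the values `μ(l_i)`; two elements lie in the
same block iff they compare the same way with every `μ(l_i)`) also satisfies
Rule 3: `μ(l_{i-1}) < μ(y)` whenever `l_{i-1} < y < l_i`. -/
theorem rule1_rule2_implies_rule3 (r p : ℕ) (hr : 0 < r) (hp : 0 < p)
    (l : Fin p → Fin r) (hl : StrictMono l)
    (hltop : (l ⟨p - 1, Nat.sub_lt hp one_pos⟩ : ℕ) + 1 = r)
    (μ : Equiv.Perm (Fin r))
    (rule1 : StrictMono fun i => μ (l i))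
    (rule2 : ∀ y y' : Fin r, y < y' →
      (∀ i, μ y ≤ μ (l i) ↔ μ y' ≤ μ (l i)) → μ y < μ y') :
    ∀ i j : Fin p, (i : ℕ) + 1 = (j : ℕ) →
      ∀ y : Fin r, l i < y → y < l j → μ (l i) < μ y := by
  classical
  intro i j hij y hy1 hy2
  by_contra h
  push_neg at h
  set S : Finset (Fin p) := Finset.univ.filter (fun m => μ y ≤ μ (l m)) with hS
  have hSne : S.Nonempty := ⟨i, by simp [hS, h]⟩
  set k := S.min' hSne with hkdef
  have hk : μ y ≤ μ (l k) := by
    have := S.min'_mem hSne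
    simpa [hS] using this
  have hmin : ∀ m, μ y ≤ μ (l m) → k ≤ m := fun m hm =>
    S.min'_le m (by simp [hS, hm])
  have hky : l k < y := lt_of_le_of_lt (hl.monotone (hmin i h)) hy1
  have hsame : ∀ m, μ (l k) ≤ μ (l m) ↔ μ y ≤ μ (l m) := by
    intro m
    constructor
    · intro hm; exact hk.trans hm
    · intro hm; exact rule1.monotone (hmin m hm)
  have := rule2 (l k) y hky hsame
  exact absurd hk (not_le.mpr this)
end

section
/- Let β, β' ∈ (0,1) with β + β' > 1, let f ∈ C^{β'}([s,t]) and h ∈ C^β([s,t]). Then the Young integral satisfies |∫_s^t f dh| ≤ K [‖f‖_{s,t,∞} + ‖f‖_{s,t,β'} (t−s)^{β'}] ‖h‖_{β} (t−s)^{β}, where ‖·‖_{s,t,∞} is the sup norm on [s,t], ‖·‖_{s,t,β'} is the β'-Hölder seminorm on [s,t], and K depends only on β, β'. -/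
/-- The Riemann–Stieltjes integral `∫_a^b f dg`, defined as the limit of
left-endpoint Riemann–Stieltjes sums along uniform partitions. -/
noncomputable def RS (f g : ℝ → ℝ) (a b : ℝ) : ℝ :=
  Filter.limUnder Filter.atTop fun n : ℕ =>
    ∑ k ∈ Finset.range n,
      f (a + k * (b - a) / n) * (g (a + (k + 1) * (b - a) / n) - g (a + k * (b - a) / n))

/-- The iterated Riemann–Stieltjes integral
`∫_a^b ∫_a^{s_r} ⋯ ∫_a^{s_2} dG_0(s_1) ⋯ dG_{r-1}(s_r)`,
where `G i` is the `i`-th integrator (index `0` innermost, `Fin.last` outermost). -/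
noncomputable def iterRS : (r : ℕ) → (Fin r → ℝ → ℝ) → ℝ → ℝ → ℝ
  | 0, _, _, _ => 1
  | (r + 1), G, a, b =>
      RS (fun u => iterRS r (fun i => G i.castSucc) a u) (G (Fin.last r)) a b


open Filter Finset Topology


lemma mvt_rpow (θ : ℝ) (hθ : 1 < θ) (x : ℝ) (hx : 1 ≤ x) :
    (θ - 1) * (x + 1) ^ (-θ) ≤ x ^ (1 - θ) - (x + 1) ^ (1 - θ) := by
  have hx0 : 0 < x := by linarith
  obtain ⟨c, hc, hc'⟩ := exists_hasDerivAt_eq_slope (fun y => y ^ (1 - θ))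
    (fun y => (1 - θ) * y ^ (1 - θ - 1)) (by linarith : x < x + 1)
    (ContinuousOn.rpow_const continuousOn_id (fun y hy => Or.inl (by rcases hy with ⟨h1, _⟩; nlinarith)))
    (fun y hy => Real.hasDerivAt_rpow_const (Or.inl (by rcases hy with ⟨h1, _⟩; nlinarith)))
  have hc0 : 0 < c := by rcases hc with ⟨h1, h2⟩; linarith
  have key : (x + 1) ^ (1 - θ) - x ^ (1 - θ) = (1 - θ) * c ^ (-θ) := by
    have h2 : (1:ℝ) - θ - 1 = -θ := by ring
    rw [← h2, hc']; ring
  have hmono : (x + 1) ^ (-θ) ≤ c ^ (-θ) :=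
    Real.rpow_le_rpow_of_nonpos hc0 (by rcases hc with ⟨_, h2⟩; linarith) (by linarith)
  nlinarith

lemma zeta_sum_bound (θ : ℝ) (hθ : 1 < θ) (M : ℕ) :
    ∑ m ∈ Finset.range M, ((m : ℝ) + 1) ^ (-θ) ≤ 1 + 1 / (θ - 1) := by
  have key : ∀ N : ℕ, ∑ m ∈ Finset.range N, ((m : ℝ) + 1 + 1) ^ (-θ) ≤ 1 / (θ - 1) := by
    intro N
    have h1 : ∀ m : ℕ, ((m : ℝ) + 1 + 1) ^ (-θ) ≤
        (((m : ℝ) + 1) ^ (1 - θ) - ((m : ℝ) + 1 + 1) ^ (1 - θ)) / (θ - 1) := by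
      intro m
      rw [le_div_iff₀ (by linarith)]
      have := mvt_rpow θ hθ ((m : ℝ) + 1) (by have := Nat.cast_nonneg (α := ℝ) m; linarith)
      nlinarith
    calc ∑ m ∈ Finset.range N, ((m : ℝ) + 1 + 1) ^ (-θ)
        ≤ ∑ m ∈ Finset.range N, ((((m : ℝ) + 1) ^ (1 - θ) - ((m : ℝ) + 1 + 1) ^ (1 - θ)) / (θ - 1)) :=
          Finset.sum_le_sum (fun m _ => h1 m)
      _ = (∑ m ∈ Finset.range N, ((fun k : ℕ => ((k : ℝ) + 1) ^ (1 - θ)) m - (fun k : ℕ => ((k : ℝ) + 1) ^ (1 - θ)) (m + 1))) / (θ - 1) := by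
          rw [← Finset.sum_div]; congr 1; apply Finset.sum_congr rfl; intro m _; push_cast; ring_nf
      _ = (((0 : ℝ) + 1) ^ (1 - θ) - ((N : ℝ) + 1) ^ (1 - θ)) / (θ - 1) := by
          rw [Finset.sum_range_sub' (fun k : ℕ => ((k : ℝ) + 1) ^ (1 - θ))]; norm_num
      _ ≤ 1 / (θ - 1) := by
          apply div_le_div_of_nonneg_right ?_ (by linarith)
          have : (0:ℝ) ≤ ((N : ℝ) + 1) ^ (1 - θ) := by positivity
          norm_num
          linarith
  rcases M with _ | N
  · simp; have h1 : 0 < θ - 1 := by linarith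
    positivity
  · rw [Finset.sum_range_succ']
    have e0 : ((0 : ℕ) : ℝ) + 1 = 1 := by norm_num
    have : ∑ m ∈ Finset.range N, (((m + 1 : ℕ) : ℝ) + 1) ^ (-θ) =
        ∑ m ∈ Finset.range N, ((m : ℝ) + 1 + 1) ^ (-θ) := by
      apply Finset.sum_congr rfl; intro m _; push_cast; ring_nf
    rw [this, e0, Real.one_rpow]
    have := key N
    linarith


/-- Riemann–Stieltjes sum of `f dh` over partition points `p 0, …, p N`. -/
noncomputable def pS (f h : ℝ → ℝ) (p : ℕ → ℝ) (N : ℕ) : ℝ :=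
  ∑ k ∈ Finset.range N, f (p k) * (h (p (k + 1)) - h (p k))

lemma pS_remove (f h : ℝ → ℝ) (p : ℕ → ℝ) (N i : ℕ) (hi : i + 2 ≤ N) :
    pS f h p N = pS f h (fun k => if k ≤ i then p k else p (k + 1)) (N - 1)
      + (f (p (i + 1)) - f (p i)) * (h (p (i + 2)) - h (p (i + 1))) := by
  set q : ℕ → ℝ := fun k => if k ≤ i then p k else p (k + 1) with hq
  have hN : N = (i + 2) + (N - i - 2) := by omega
  have hN' : N - 1 = (i + 1) + (N - i - 2) := by omega
  have e1 : pS f h p N = (∑ k ∈ Finset.range i, f (p k) * (h (p (k + 1)) - h (p k)))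
      + f (p i) * (h (p (i + 1)) - h (p i)) + f (p (i + 1)) * (h (p (i + 2)) - h (p (i + 1)))
      + ∑ r ∈ Finset.range (N - i - 2), f (p (i + 2 + r)) * (h (p (i + 2 + r + 1)) - h (p (i + 2 + r))) := by
    rw [pS, hN, Finset.sum_range_add, Finset.sum_range_succ, Finset.sum_range_succ,
      show i + 2 + (N - i - 2) - i - 2 = N - i - 2 from by omega,
      show i + 1 + 1 = i + 2 from rfl]
  have e2 : pS f h q (N - 1) = (∑ k ∈ Finset.range i, f (p k) * (h (p (k + 1)) - h (p k)))
      + f (p i) * (h (p (i + 2)) - h (p i))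
      + ∑ r ∈ Finset.range (N - i - 2), f (p (i + 2 + r)) * (h (p (i + 2 + r + 1)) - h (p (i + 2 + r))) := by
    rw [pS, hN', Finset.sum_range_add, Finset.sum_range_succ]
    congr 1
    · congr 1
      · apply Finset.sum_congr rfl
        intro k hk
        simp only [Finset.mem_range] at hk
        have h1 : q k = p k := by simp only [hq]; rw [if_pos (by omega)]
        have h2 : q (k + 1) = p (k + 1) := by simp only [hq]; rw [if_pos (by omega)]
        rw [h1, h2]
      · have h1 : q i = p i := by simp only [hq]; rw [if_pos (le_refl i)]
        have h2 : q (i + 1) = p (i + 2) := by simp only [hq]; rw [if_neg (by omega)]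
        rw [h1, h2]
    · apply Finset.sum_congr rfl
      intro r hr
      have h1 : q (i + 1 + r) = p (i + 2 + r) := by
        simp only [hq]; rw [if_neg (by omega)]; congr 1; omega
      have h2 : q (i + 1 + r + 1) = p (i + 2 + r + 1) := by
        simp only [hq]; rw [if_neg (by omega)]; congr 1; omega
      rw [h1, h2]
  rw [e1, e2]; ring

lemma youngLove (f h : ℝ → ℝ) (s t β β' Cf Ch : ℝ)
    (hβ0 : 0 < β) (hβ'0 : 0 < β') (hCf : 0 ≤ Cf) (hCh : 0 ≤ Ch)
    (hf : ∀ u ∈ Set.Icc s t, ∀ v ∈ Set.Icc s t, |f v - f u| ≤ Cf * |v - u| ^ β')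
    (hh : ∀ u ∈ Set.Icc s t, ∀ v ∈ Set.Icc s t, |h v - h u| ≤ Ch * |v - u| ^ β) :
    ∀ N : ℕ, ∀ p : ℕ → ℝ, (∀ k, k < N → p k ≤ p (k + 1)) → (∀ k, k ≤ N → p k ∈ Set.Icc s t) →
      |pS f h p N - f (p 0) * (h (p N) - h (p 0))| ≤
        Cf * Ch * (2 * (p N - p 0)) ^ (β + β') *
          ∑ m ∈ Finset.range (N - 1), ((m : ℝ) + 1) ^ (-(β + β')) := by
  intro N
  induction N using Nat.strong_induction_on with
  | _ N IH =>
    intro p hmono hmem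
    -- monotonicity of p on [0, N]
    have hmono' : ∀ k l, k ≤ l → l ≤ N → p k ≤ p l := by
      intro k l hkl hlN
      induction l with
      | zero => simp_all
      | succ l ihl =>
        rcases Nat.eq_or_lt_of_le hkl with rfl | hkl'
        · exact le_refl _
        · exact le_trans (ihl (by omega) (by omega)) (hmono l (by omega))
    match N with
    | 0 => simp [pS]
    | 1 =>
      simp only [pS, Finset.sum_range_one]
      simp
    | (M + 2) =>
      set N := M + 2 with hNdef
      set b := p N with hb
      set a := p 0 with ha
      have hba : 0 ≤ b - a := by have := hmono' 0 N (by omega) (le_refl _); linarith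
      -- find a point to remove
      have hex : ∃ i, i < N - 1 ∧ p (i + 2) - p i ≤ 2 * (b - a) / (N - 1 : ℕ) := by
        by_contra hcon
        push_neg at hcon
        have hlt : ∀ i ∈ Finset.range (N - 1),
            2 * (b - a) / ((N - 1 : ℕ) : ℝ) < p (i + 2) - p i := by
          intro i hi; exact hcon i (Finset.mem_range.mp hi)
        have hsum := Finset.sum_lt_sum_of_nonempty (by simp [hNdef] : (Finset.range (N - 1)).Nonempty) hlt
        have hcard : ∑ _i ∈ Finset.range (N - 1), 2 * (b - a) / ((N - 1 : ℕ) : ℝ)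
            = 2 * (b - a) := by
          rw [Finset.sum_const, Finset.card_range, nsmul_eq_mul]
          field_simp
          exact mul_div_cancel_left₀ (b - a) (Nat.cast_ne_zero.mpr (by omega))
        have htel : ∑ i ∈ Finset.range (N - 1), (p (i + 2) - p i)
            = (p N - p 1) + (p (N - 1) - p 0) := by
          have e1 : ∑ i ∈ Finset.range (N - 1), (p (i + 2) - p i)
              = ∑ i ∈ Finset.range (N - 1), ((p (i + 2) - p (i + 1)) + (p (i + 1) - p i)) := by
            apply Finset.sum_congr rfl; intro i _; ring
          rw [e1, Finset.sum_add_distrib,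
            Finset.sum_range_sub (fun i => p (i + 1)), Finset.sum_range_sub p]
          have : N - 1 + 1 = N := by omega
          rw [this]
        have h1 : p 0 ≤ p 1 := hmono 0 (by omega)
        have h2 : p (N - 1) ≤ p N := by
          have := hmono (N - 1) (by omega); rwa [show N - 1 + 1 = N from by omega] at this
        rw [hcard, htel] at hsum
        simp only [← ha, ← hb] at hsum
        linarith
      obtain ⟨i, hiN, hismall⟩ := hex
      set q : ℕ → ℝ := fun k => if k ≤ i then p k else p (k + 1) with hq
      have hq0 : q 0 = p 0 := by simp [hq]
      have hqN : q (N - 1) = p N := by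
        simp only [hq]; rw [if_neg (by omega), show N - 1 + 1 = N from by omega]
      -- q is a valid partition with N - 1 intervals
      have hqmono : ∀ k, k < N - 1 → q k ≤ q (k + 1) := by
        intro k hk
        simp only [hq]
        rcases le_or_gt (k + 1) i with hle | hgt
        · rw [if_pos (by omega), if_pos hle]; exact hmono k (by omega)
        · rcases le_or_gt k i with hle2 | hgt2
          · rw [if_pos hle2, if_neg (by omega)]
            have : i = k := by omega
            subst this
            exact le_trans (hmono i (by omega)) (hmono (i + 1) (by omega))
          · rw [if_neg (by omega), if_neg (by omega)]
            exact hmono (k + 1) (by omega)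
      have hqmem : ∀ k, k ≤ N - 1 → q k ∈ Set.Icc s t := by
        intro k hk
        simp only [hq]
        rcases le_or_gt k i with hle | hgt
        · rw [if_pos hle]; exact hmem k (by omega)
        · rw [if_neg (by omega)]; exact hmem (k + 1) (by omega)
      have hIH := IH (N - 1) (by omega) q hqmono hqmem
      rw [hq0, hqN] at hIH
      -- the removal cost
      have hrem := pS_remove f h p N i (by omega)
      have hcost : |(f (p (i + 1)) - f (p i)) * (h (p (i + 2)) - h (p (i + 1)))| ≤
          Cf * Ch * (2 * (b - a)) ^ (β + β') * ((N - 1 : ℕ) : ℝ) ^ (-(β + β')) := by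
        have hm0 := hmem i (by omega)
        have hm1 := hmem (i + 1) (by omega)
        have hm2 := hmem (i + 2) (by omega)
        have h01 : p i ≤ p (i + 1) := hmono i (by omega)
        have h12 : p (i + 1) ≤ p (i + 2) := hmono (i + 1) (by omega)
        set D := p (i + 2) - p i with hD
        have hD0 : 0 ≤ D := by simp only [hD]; linarith
        have hfb : |f (p (i + 1)) - f (p i)| ≤ Cf * D ^ β' := by
          refine le_trans (hf (p i) hm0 (p (i + 1)) hm1) ?_
          apply mul_le_mul_of_nonneg_left ?_ hCf
          rw [abs_of_nonneg (by linarith)]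
          exact Real.rpow_le_rpow (by linarith) (by simp only [hD]; linarith) hβ'0.le
        have hhb : |h (p (i + 2)) - h (p (i + 1))| ≤ Ch * D ^ β := by
          refine le_trans (hh (p (i + 1)) hm1 (p (i + 2)) hm2) ?_
          apply mul_le_mul_of_nonneg_left ?_ hCh
          rw [abs_of_nonneg (by linarith)]
          exact Real.rpow_le_rpow (by linarith) (by simp only [hD]; linarith) hβ0.le
        rw [abs_mul]
        have step1 : |f (p (i + 1)) - f (p i)| * |h (p (i + 2)) - h (p (i + 1))| ≤
            (Cf * D ^ β') * (Ch * D ^ β) := by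
          apply mul_le_mul hfb hhb (abs_nonneg _) (by positivity)
        refine step1.trans ?_
        have hDsum : D ^ β' * D ^ β = D ^ (β + β') := by
          rw [Real.rpow_add' hD0 (by positivity : β + β' ≠ 0)]
          ring
        have hDle : D ^ (β + β') ≤ (2 * (b - a)) ^ (β + β') * ((N - 1 : ℕ) : ℝ) ^ (-(β + β')) := by
          have hN1 : (0 : ℝ) < ((N - 1 : ℕ) : ℝ) := by
            have : 0 < N - 1 := by omega
            exact_mod_cast this
          have : D ≤ 2 * (b - a) / ((N - 1 : ℕ) : ℝ) := hismall
          refine le_trans (Real.rpow_le_rpow hD0 this (by positivity)) ?_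
          rw [Real.div_rpow (by linarith) hN1.le, Real.rpow_neg hN1.le, div_eq_mul_inv]
        calc Cf * D ^ β' * (Ch * D ^ β) = Cf * Ch * (D ^ β' * D ^ β) := by ring
          _ = Cf * Ch * D ^ (β + β') := by rw [hDsum]
          _ ≤ Cf * Ch * ((2 * (b - a)) ^ (β + β') * ((N - 1 : ℕ) : ℝ) ^ (-(β + β'))) := by
              apply mul_le_mul_of_nonneg_left hDle (by positivity)
          _ = Cf * Ch * (2 * (b - a)) ^ (β + β') * ((N - 1 : ℕ) : ℝ) ^ (-(β + β')) := by ring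
      -- combine
      have hsplit : pS f h p N - f a * (h b - h a) =
          (pS f h q (N - 1) - f a * (h b - h a))
            + (f (p (i + 1)) - f (p i)) * (h (p (i + 2)) - h (p (i + 1))) := by
        rw [hrem]; simp only [hq]; ring
      rw [hsplit]
      refine le_trans (abs_add_le _ _) ?_
      have hT : ∑ m ∈ Finset.range (N - 1), ((m : ℝ) + 1) ^ (-(β + β')) =
          (∑ m ∈ Finset.range (N - 1 - 1), ((m : ℝ) + 1) ^ (-(β + β')))
            + ((N - 1 : ℕ) : ℝ) ^ (-(β + β')) := by
        rw [show N - 1 = (N - 1 - 1) + 1 from by omega, Finset.sum_range_succ]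
        congr 2
        push_cast [show N - 1 - 1 = M from by omega, show N - 1 = M + 1 from by omega]
        ring
      rw [hT, mul_add]
      have := hIH
      linarith

noncomputable def uS (f h : ℝ → ℝ) (s t : ℝ) (n : ℕ) : ℝ :=
  ∑ k ∈ Finset.range n,
    f (s + k * (t - s) / n) * (h (s + (k + 1) * (t - s) / n) - h (s + k * (t - s) / n))

lemma sum_range_mul' (F : ℕ → ℝ) (n q : ℕ) :
    ∑ j ∈ Finset.range (n * q), F j = ∑ k ∈ Finset.range n, ∑ i ∈ Finset.range q, F (k * q + i) := by
  induction n with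
  | zero => simp
  | succ n ih =>
    rw [show (n + 1) * q = n * q + q from by ring, Finset.sum_range_add, ih, Finset.sum_range_succ]

lemma mem_aux (s t : ℝ) (hst : s ≤ t) (j m : ℕ) (hm : 0 < m) (hj : j ≤ m) :
    s + (j : ℝ) * (t - s) / (m : ℝ) ∈ Set.Icc s t := by
  have hm' : (0 : ℝ) < (m : ℝ) := by exact_mod_cast hm
  have hj' : (j : ℝ) ≤ (m : ℝ) := by exact_mod_cast hj
  constructor
  · have : 0 ≤ (j : ℝ) * (t - s) / (m : ℝ) :=
      div_nonneg (mul_nonneg (Nat.cast_nonneg j) (by linarith)) hm'.le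
    linarith
  · rw [← sub_nonneg]
    have : t - (s + (j : ℝ) * (t - s) / (m : ℝ)) = ((m : ℝ) - j) * (t - s) / m := by
      field_simp; ring
    rw [this]
    have h1 : 0 ≤ (m : ℝ) - j := by linarith
    exact div_nonneg (mul_nonneg h1 (by linarith)) hm'.le

section
variable (f h : ℝ → ℝ) (s t β β' Cf Ch : ℝ)

lemma uS_young (hst : s ≤ t)
    (hβ0 : 0 < β) (hβ'0 : 0 < β') (hCf : 0 ≤ Cf) (hCh : 0 ≤ Ch) (hθ : 1 < β + β')
    (hf : ∀ u ∈ Set.Icc s t, ∀ v ∈ Set.Icc s t, |f v - f u| ≤ Cf * |v - u| ^ β')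
    (hh : ∀ u ∈ Set.Icc s t, ∀ v ∈ Set.Icc s t, |h v - h u| ≤ Ch * |v - u| ^ β)
    (n : ℕ) (hn : 0 < n) :
    |uS f h s t n - f s * (h t - h s)| ≤
      Cf * Ch * (2 * (t - s)) ^ (β + β') * (1 + 1 / (β + β' - 1)) := by
  have hn' : (0 : ℝ) < (n : ℝ) := by exact_mod_cast hn
  set p : ℕ → ℝ := fun i => s + (i : ℝ) * (t - s) / (n : ℝ) with hp
  have hpe : pS f h p n = uS f h s t n := by
    apply Finset.sum_congr rfl
    intro k _
    simp only [hp]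
    push_cast
    ring_nf
  have hp0 : p 0 = s := by simp [hp]
  have hpn : p n = t := by simp only [hp]; field_simp; ring
  have hmono : ∀ k, k < n → p k ≤ p (k + 1) := by
    intro k _
    simp only [hp]
    have : ((k : ℝ)) * (t - s) / n ≤ ((k : ℝ) + 1) * (t - s) / n := by
      apply (div_le_div_iff_of_pos_right hn').mpr
      nlinarith
    push_cast
    linarith
  have hmem : ∀ k, k ≤ n → p k ∈ Set.Icc s t := fun k hk => mem_aux s t hst k n hn hk
  have := youngLove f h s t β β' Cf Ch hβ0 hβ'0 hCf hCh hf hh n p hmono hmem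
  rw [hpe, hp0, hpn] at this
  refine this.trans ?_
  apply mul_le_mul_of_nonneg_left (zeta_sum_bound (β + β') hθ (n - 1)) ?_
  have : (0:ℝ) ≤ 2 * (t - s) := by linarith
  positivity

lemma uS_refine (hst : s ≤ t)
    (hβ0 : 0 < β) (hβ'0 : 0 < β') (hCf : 0 ≤ Cf) (hCh : 0 ≤ Ch) (hθ : 1 < β + β')
    (hf : ∀ u ∈ Set.Icc s t, ∀ v ∈ Set.Icc s t, |f v - f u| ≤ Cf * |v - u| ^ β')
    (hh : ∀ u ∈ Set.Icc s t, ∀ v ∈ Set.Icc s t, |h v - h u| ≤ Ch * |v - u| ^ β)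
    (n q : ℕ) (hn : 0 < n) (hq : 0 < q) :
    |uS f h s t (n * q) - uS f h s t n| ≤
      Cf * Ch * (2 * (t - s)) ^ (β + β') * (1 + 1 / (β + β' - 1)) * (n : ℝ) ^ (1 - (β + β')) := by
  have hn' : (0 : ℝ) < (n : ℝ) := by exact_mod_cast hn
  have hq' : (0 : ℝ) < (q : ℝ) := by exact_mod_cast hq
  have hnq : 0 < n * q := Nat.mul_pos hn hq
  have hnq' : (0 : ℝ) < ((n * q : ℕ) : ℝ) := by exact_mod_cast hnq
  set Z := 1 + 1 / (β + β' - 1) with hZ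
  have hZ0 : 0 ≤ Z := by
    have : 0 < β + β' - 1 := by linarith
    positivity
  set P : ℕ → ℕ → ℝ := fun k i => s + ((k * q + i : ℕ) : ℝ) * (t - s) / ((n * q : ℕ) : ℝ) with hP
  have hP0 : ∀ k, P k 0 = s + (k : ℝ) * (t - s) / (n : ℝ) := by
    intro k; simp only [hP]; push_cast; field_simp; ring
  have hPq : ∀ k, P k q = s + ((k : ℝ) + 1) * (t - s) / (n : ℝ) := by
    intro k; simp only [hP]; push_cast; field_simp
  have h1 : uS f h s t (n * q) = ∑ k ∈ Finset.range n, pS f h (P k) q := by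
    rw [uS, sum_range_mul']
    apply Finset.sum_congr rfl
    intro k _
    apply Finset.sum_congr rfl
    intro i _
    simp only [hP]
    push_cast
    ring_nf
  have h2 : uS f h s t n = ∑ k ∈ Finset.range n, f (P k 0) * (h (P k q) - h (P k 0)) := by
    apply Finset.sum_congr rfl
    intro k _
    rw [hP0, hPq]
  have hbound : ∀ k ∈ Finset.range n,
      |pS f h (P k) q - f (P k 0) * (h (P k q) - h (P k 0))| ≤
        Cf * Ch * (2 * (t - s)) ^ (β + β') * Z * ((n : ℝ))⁻¹ ^ (β + β') := by
    intro k hk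
    have hkn : k < n := Finset.mem_range.mp hk
    have hmono : ∀ i, i < q → P k i ≤ P k (i + 1) := by
      intro i _
      simp only [hP]
      have hle : ((k * q + i : ℕ) : ℝ) * (t - s) / ((n * q : ℕ) : ℝ)
          ≤ ((k * q + (i + 1) : ℕ) : ℝ) * (t - s) / ((n * q : ℕ) : ℝ) := by
        apply (div_le_div_iff_of_pos_right hnq').mpr
        apply mul_le_mul_of_nonneg_right ?_ (by linarith)
        push_cast; linarith
      push_cast at hle ⊢
      linarith
    have hmem : ∀ i, i ≤ q → P k i ∈ Set.Icc s t := by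
      intro i hi
      simp only [hP]
      exact mem_aux s t hst (k * q + i) (n * q) hnq (by nlinarith)
    have := youngLove f h s t β β' Cf Ch hβ0 hβ'0 hCf hCh hf hh q (P k) hmono hmem
    have hdiff : P k q - P k 0 = (t - s) / (n : ℝ) := by
      rw [hP0, hPq]; field_simp; ring
    rw [hdiff] at this
    refine this.trans ?_
    calc Cf * Ch * (2 * ((t - s) / (n:ℝ))) ^ (β + β') * ∑ m ∈ Finset.range (q - 1), ((m:ℝ)+1) ^ (-(β+β'))
        ≤ Cf * Ch * (2 * ((t - s) / (n:ℝ))) ^ (β + β') * Z := by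
          apply mul_le_mul_of_nonneg_left (zeta_sum_bound (β + β') hθ (q - 1)) ?_
          have h2ts : (0:ℝ) ≤ 2 * ((t - s)/(n:ℝ)) := by
            have : (0:ℝ) ≤ t - s := by linarith
            positivity
          positivity
      _ = Cf * Ch * (2 * (t - s)) ^ (β + β') * Z * ((n : ℝ))⁻¹ ^ (β + β') := by
          rw [show 2 * ((t - s) / (n:ℝ)) = (2 * (t - s)) * ((n:ℝ))⁻¹ from by field_simp,
            Real.mul_rpow (by linarith) (by positivity)]
          ring
  calc |uS f h s t (n * q) - uS f h s t n|
      = |∑ k ∈ Finset.range n, (pS f h (P k) q - f (P k 0) * (h (P k q) - h (P k 0)))| := by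
        rw [h1, h2, Finset.sum_sub_distrib]
    _ ≤ ∑ k ∈ Finset.range n, |pS f h (P k) q - f (P k 0) * (h (P k q) - h (P k 0))| :=
        Finset.abs_sum_le_sum_abs _ _
    _ ≤ ∑ _k ∈ Finset.range n, Cf * Ch * (2 * (t - s)) ^ (β + β') * Z * ((n : ℝ))⁻¹ ^ (β + β') :=
        Finset.sum_le_sum hbound
    _ = (n : ℝ) * (Cf * Ch * (2 * (t - s)) ^ (β + β') * Z * ((n : ℝ))⁻¹ ^ (β + β')) := by
        rw [Finset.sum_const, Finset.card_range, nsmul_eq_mul]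
    _ = Cf * Ch * (2 * (t - s)) ^ (β + β') * Z * (n : ℝ) ^ (1 - (β + β')) := by
        have e1 : ((n:ℝ))⁻¹ ^ (β + β') = ((n:ℝ) ^ (β + β'))⁻¹ := Real.inv_rpow hn'.le _
        have e2 : ((n:ℝ)) ^ (1 - (β + β')) = (n:ℝ) * ((n:ℝ) ^ (β + β'))⁻¹ := by
          rw [show (1:ℝ) - (β + β') = 1 + -(β + β') from by ring]
          rw [Real.rpow_add hn', Real.rpow_one, Real.rpow_neg hn'.le]
        rw [e1, e2]; ring
end

/-- The Young integral estimate: for `β + β' > 1` there is a constant `K` depending only on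
`β, β'` such that `|∫_s^t f dh| ≤ K (‖f‖_{s,t,∞} + ‖f‖_{s,t,β'} (t−s)^{β'}) ‖h‖_β (t−s)^β`
for every `f ∈ C^{β'}([s,t])` and `h ∈ C^β([s,t])` (the norms being replaced by arbitrary
upper bounds `Mf`, `Cf`, `Ch`). -/
theorem young_integral_estimate (β β' : ℝ)
    (hβ0 : 0 < β) (hβ1 : β < 1) (hβ'0 : 0 < β') (hβ'1 : β' < 1) (hββ' : 1 < β + β') :
    ∃ K : ℝ, 0 < K ∧ ∀ (s t : ℝ) (f h : ℝ → ℝ) (Mf Cf Ch : ℝ), s ≤ t →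
      (∀ u ∈ Set.Icc s t, |f u| ≤ Mf) →
      (∀ u ∈ Set.Icc s t, ∀ v ∈ Set.Icc s t, |f v - f u| ≤ Cf * |v - u| ^ β') →
      (∀ u ∈ Set.Icc s t, ∀ v ∈ Set.Icc s t, |h v - h u| ≤ Ch * |v - u| ^ β) →
      |RS f h s t| ≤ K * (Mf + Cf * (t - s) ^ β') * Ch * (t - s) ^ β := by
  have hθ1 : 0 < β + β' - 1 := by linarith
  set Z : ℝ := 1 + 1 / (β + β' - 1) with hZdef
  have hZ0 : 0 < Z := by positivity
  set K : ℝ := 2 ^ (β + β') * Z + 1 with hKdef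
  have h2θ : (0:ℝ) < 2 ^ (β + β') := Real.rpow_pos_of_pos two_pos _
  have hK0 : 0 < K := by nlinarith
  have hK1 : 1 ≤ K := by nlinarith
  have hKθ : 2 ^ (β + β') * Z ≤ K := by nlinarith
  refine ⟨K, hK0, ?_⟩
  intro s t f h Mf Cf Ch hst hMf hf hh
  rcases eq_or_lt_of_le hst with rfl | hts
  · -- degenerate case s = t
    have hRS : RS f h s s = 0 := by
      have he : (fun n : ℕ =>
          ∑ k ∈ Finset.range n,
            f (s + k * (s - s) / n) * (h (s + (k + 1) * (s - s) / n) - h (s + k * (s - s) / n)))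
          = fun _ : ℕ => (0 : ℝ) := by
        funext n
        apply Finset.sum_eq_zero
        intro k _
        simp
      rw [RS, he]
      exact Filter.Tendsto.limUnder_eq tendsto_const_nhds
    rw [hRS, sub_self, Real.zero_rpow hβ0.ne', abs_zero, mul_zero]
  · have hts' : 0 < t - s := by linarith
    have hMf0 : 0 ≤ Mf := le_trans (abs_nonneg _) (hMf s ⟨le_refl s, hst⟩)
    have habs : |t - s| = t - s := abs_of_pos hts'
    have hrp : (0:ℝ) < |t - s| ^ β' := Real.rpow_pos_of_pos (by rw [habs]; exact hts') _
    have hrpβ : (0:ℝ) < |t - s| ^ β := Real.rpow_pos_of_pos (by rw [habs]; exact hts') _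
    have hCf0 : 0 ≤ Cf := by
      have h1 := le_trans (abs_nonneg _) (hf s ⟨le_refl s, hst⟩ t ⟨hst, le_refl t⟩)
      by_contra hneg
      push_neg at hneg
      nlinarith
    have hCh0 : 0 ≤ Ch := by
      have h1 := le_trans (abs_nonneg _) (hh s ⟨le_refl s, hst⟩ t ⟨hst, le_refl t⟩)
      by_contra hneg
      push_neg at hneg
      nlinarith
    set A : ℝ := Cf * Ch * (2 * (t - s)) ^ (β + β') * Z with hAdef
    have hA0 : 0 ≤ A := by
      have : (0:ℝ) ≤ 2 * (t - s) := by linarith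
      positivity
    -- the sequence of Riemann sums is Cauchy
    have hmono_rpow : ∀ (N n : ℕ), 0 < N → N ≤ n →
        ((n : ℝ)) ^ (1 - (β + β')) ≤ ((N : ℝ)) ^ (1 - (β + β')) := by
      intro N n hN hNn
      apply Real.rpow_le_rpow_of_nonpos (by exact_mod_cast hN) (by exact_mod_cast hNn)
      linarith
    have hcauchy : CauchySeq (fun n : ℕ => uS f h s t n) := by
      rw [Metric.cauchySeq_iff']
      intro ε hε
      have htend : Tendsto (fun N : ℕ => 2 * A * ((N : ℝ)) ^ (1 - (β + β'))) atTop (𝓝 0) := by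
        have h1 : Tendsto (fun x : ℝ => x ^ (-(β + β' - 1))) atTop (𝓝 0) :=
          tendsto_rpow_neg_atTop hθ1
        have h2 : Tendsto (fun N : ℕ => ((N : ℝ)) ^ (1 - (β + β'))) atTop (𝓝 0) := by
          have he : (1 : ℝ) - (β + β') = -(β + β' - 1) := by ring
          rw [he]
          exact h1.comp (tendsto_natCast_atTop_atTop (R := ℝ))
        simpa using h2.const_mul (2 * A)
      have hev : ∀ᶠ N : ℕ in atTop, 2 * A * ((N : ℝ)) ^ (1 - (β + β')) < ε := by
        exact htend.eventually_lt_const hε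
      obtain ⟨N, hN⟩ := ((hev.and (eventually_ge_atTop 1)).exists)
      refine ⟨N, fun n hn => ?_⟩
      obtain ⟨hNε, hN1⟩ := hN
      have hn1 : 0 < n := lt_of_lt_of_le hN1 hn
      have hr1 := uS_refine f h s t β β' Cf Ch hst hβ0 hβ'0 hCf0 hCh0 hββ' hf hh n N hn1 hN1
      have hr2 := uS_refine f h s t β β' Cf Ch hst hβ0 hβ'0 hCf0 hCh0 hββ' hf hh N n hN1 hn1
      rw [Nat.mul_comm] at hr2
      have hle1 : ((n : ℝ)) ^ (1 - (β + β')) ≤ ((N : ℝ)) ^ (1 - (β + β')) :=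
        hmono_rpow N n hN1 hn
      rw [Real.dist_eq]
      have : |uS f h s t n - uS f h s t N| ≤
          |uS f h s t (n * N) - uS f h s t n| + |uS f h s t (n * N) - uS f h s t N| := by
        have := abs_sub_le (uS f h s t n) (uS f h s t (n * N)) (uS f h s t N)
        rw [abs_sub_comm (uS f h s t n) (uS f h s t (n * N))] at this
        exact this
      calc |uS f h s t n - uS f h s t N|
          ≤ |uS f h s t (n * N) - uS f h s t n| + |uS f h s t (n * N) - uS f h s t N| := this
        _ ≤ A * ((n : ℝ)) ^ (1 - (β + β')) + A * ((N : ℝ)) ^ (1 - (β + β')) := by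
            apply add_le_add hr1 hr2
        _ ≤ 2 * A * ((N : ℝ)) ^ (1 - (β + β')) := by nlinarith [Real.rpow_pos_of_pos (show (0:ℝ) < (N:ℝ) by exact_mod_cast hN1) (1 - (β + β'))]
        _ < ε := hNε
    obtain ⟨L, hL⟩ := cauchySeq_tendsto_of_complete hcauchy
    have hRSL : RS f h s t = L := by
      rw [show RS f h s t = limUnder atTop (fun n : ℕ => uS f h s t n) from rfl]
      exact hL.limUnder_eq
    -- bound on |L - f s * (h t - h s)|
    have hLbound : |L - f s * (h t - h s)| ≤ A := by
      have htendabs : Tendsto (fun n : ℕ => |uS f h s t n - f s * (h t - h s)|) atTop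
          (𝓝 |L - f s * (h t - h s)|) := ((hL.sub_const _).abs)
      apply le_of_tendsto htendabs
      filter_upwards [eventually_ge_atTop 1] with n hn
      exact uS_young f h s t β β' Cf Ch hst hβ0 hβ'0 hCf0 hCh0 hββ' hf hh n hn
    -- final computation
    have hfs : |f s| ≤ Mf := hMf s ⟨le_refl s, hst⟩
    have hht : |h t - h s| ≤ Ch * (t - s) ^ β := by
      have := hh s ⟨le_refl s, hst⟩ t ⟨hst, le_refl t⟩
      rwa [habs] at this
    have hbdry : |f s * (h t - h s)| ≤ Mf * (Ch * (t - s) ^ β) := by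
      rw [abs_mul]
      apply mul_le_mul hfs hht (abs_nonneg _) hMf0
    have hAexp : A = Cf * Ch * 2 ^ (β + β') * Z * ((t - s) ^ β * (t - s) ^ β') := by
      rw [hAdef, Real.mul_rpow (by norm_num) hts'.le, ← Real.rpow_add hts']
      ring
    have hL2 : |L| ≤ Mf * (Ch * (t - s) ^ β) + A := by
      have := abs_sub_abs_le_abs_sub L (f s * (h t - h s))
      have h2 := abs_add_le (L - f s * (h t - h s)) (f s * (h t - h s))
      simp only [sub_add_cancel] at h2
      linarith
    rw [hRSL]
    have hrpβ' : (0:ℝ) < (t - s) ^ β' := Real.rpow_pos_of_pos hts' _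
    have hrpβ2 : (0:ℝ) < (t - s) ^ β := Real.rpow_pos_of_pos hts' _
    have expand : K * (Mf + Cf * (t - s) ^ β') * Ch * (t - s) ^ β =
        K * (Mf * (Ch * (t - s) ^ β)) + K * (Cf * Ch * ((t - s) ^ β * (t - s) ^ β')) := by
      ring
    rw [expand]
    have key1 : Mf * (Ch * (t - s) ^ β) ≤ K * (Mf * (Ch * (t - s) ^ β)) :=
      le_mul_of_one_le_left (mul_nonneg hMf0 (mul_nonneg hCh0 hrpβ2.le)) hK1
    have hnn : 0 ≤ Cf * Ch * ((t - s) ^ β * (t - s) ^ β') := by positivity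
    have key2 : A ≤ K * (Cf * Ch * ((t - s) ^ β * (t - s) ^ β')) := by
      rw [hAexp]
      calc Cf * Ch * 2 ^ (β + β') * Z * ((t - s) ^ β * (t - s) ^ β')
          = (2 ^ (β + β') * Z) * (Cf * Ch * ((t - s) ^ β * (t - s) ^ β')) := by ring
        _ ≤ K * (Cf * Ch * ((t - s) ^ β * (t - s) ^ β')) := mul_le_mul_of_nonneg_right hKθ hnn
    linarith
end

section
/- Let r ∈ ℕ, β_j ∈ (1/2,1] for j = 1,…,r, and let g^j be β_j-Hölder continuous on [s,s']. Define the iterated integral g^α_{s,t} = ∫_s^t ∫_s^{s₁} ⋯ ∫_s^{s_{r−1}} dg^1_{s_r} ⋯ dg^{r−1}_{s₂} dg^r_{s₁}. Then there is a constant K > 0 such that for all t, t' ∈ [s,s'] with t ≤ t', |g^α_{s,t'} − g^α_{s,t}| ≤ K (Π_{j=1}^r ‖g^j‖_{s,s',β_j}) (s'−s)^{β₁+⋯+β_{r−1}} (t'−t)^{β_r}. -/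
open List Filter Set

namespace YoungAux

/-- head of a list of reals, defaulting to 0 -/
def hd : List ℝ → ℝ
  | [] => 0
  | x :: _ => x

/-- last element of a list of reals, defaulting to 0 -/
def lst : List ℝ → ℝ
  | [] => 0
  | [x] => x
  | _ :: y :: l => lst (y :: l)

/-- left-point Riemann–Stieltjes sum along a partition given as a list -/
def pSum (F h : ℝ → ℝ) : List ℝ → ℝ
  | [] => 0
  | [_] => 0
  | x :: y :: l => F x * (h y - h x) + pSum F h (y :: l)

@[simp] lemma hd_cons (x : ℝ) (l : List ℝ) : hd (x :: l) = x := rfl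

lemma hd_eq_head : ∀ (l : List ℝ) (h : l ≠ []), hd l = l.head h
  | [], h => absurd rfl h
  | x :: t, _ => rfl

@[simp] lemma lst_singleton (x : ℝ) : lst [x] = x := rfl

@[simp] lemma lst_cons_cons (x y : ℝ) (l : List ℝ) : lst (x :: y :: l) = lst (y :: l) := rfl

lemma lst_cons (x : ℝ) {l : List ℝ} (hl : l ≠ []) : lst (x :: l) = lst l := by
  cases l with
  | nil => exact absurd rfl hl
  | cons y t => rfl

lemma lst_append {l₂ : List ℝ} (l₁ : List ℝ) (h₂ : l₂ ≠ []) : lst (l₁ ++ l₂) = lst l₂ := by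
  induction l₁ with
  | nil => rfl
  | cons x t ih =>
      have ht : t ++ l₂ ≠ [] := by
        intro h
        exact h₂ (List.append_eq_nil_iff.1 h).2
      rw [List.cons_append, lst_cons x ht, ih]

lemma lst_mem : ∀ {l : List ℝ}, l ≠ [] → lst l ∈ l
  | [], h => absurd rfl h
  | [x], _ => by simp
  | x :: y :: t, _ => by
      have := lst_mem (l := y :: t) (by simp)
      simp only [lst_cons_cons]
      exact List.mem_cons_of_mem _ this

lemma hd_mem : ∀ {l : List ℝ}, l ≠ [] → hd l ∈ l
  | [], h => absurd rfl h
  | x :: t, _ => by simp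

@[simp] lemma pSum_cons_cons (F h : ℝ → ℝ) (x y : ℝ) (l : List ℝ) :
    pSum F h (x :: y :: l) = F x * (h y - h x) + pSum F h (y :: l) := rfl

@[simp] lemma pSum_singleton (F h : ℝ → ℝ) (x : ℝ) : pSum F h [x] = 0 := rfl

lemma pSum_append (F h : ℝ → ℝ) : ∀ (l₁ l₂ : List ℝ), l₁ ≠ [] → l₂ ≠ [] →
    pSum F h (l₁ ++ l₂)
      = pSum F h l₁ + F (lst l₁) * (h (hd l₂) - h (lst l₁)) + pSum F h l₂ := by
  intro l₁
  induction l₁ with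
  | nil => intro l₂ h1 _; exact absurd rfl h1
  | cons x t ih =>
      intro l₂ _ h2
      cases t with
      | nil =>
          cases l₂ with
          | nil => exact absurd rfl h2
          | cons y u => simp [pSum]
      | cons y u =>
          have := ih l₂ (by simp) h2
          simp only [List.cons_append] at this ⊢
          simp only [lst_cons_cons]
          rw [pSum_cons_cons, this, pSum_cons_cons]
          ring

lemma sorted_le_hd {l : List ℝ} (hs : l.Pairwise (· ≤ ·)) (hne : l ≠ []) :
    ∀ z ∈ l, hd l ≤ z := by
  cases l with
  | nil => exact absurd rfl hne
  | cons x t =>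
      intro z hz
      rcases List.mem_cons.1 hz with h | h
      · simp [h]
      · exact (List.pairwise_cons.1 hs).1 z h
  

lemma sorted_lst_le {l : List ℝ} (hs : l.Pairwise (· ≤ ·)) :
    ∀ z ∈ l, z ≤ lst l := by
  induction l with
  | nil => intro z hz; simp at hz
  | cons x t ih =>
      intro z hz
      cases t with
      | nil => simp at hz; simp [hz]
      | cons y u =>
          rcases List.mem_cons.1 hz with h | h
          · subst h
            calc z ≤ y := (List.pairwise_cons.1 hs).1 y (by simp)
            _ ≤ lst (y :: u) := ih hs.of_cons y (by simp)
          · simpa using ih hs.of_cons z h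

lemma pSum_of_const {F h : ℝ → ℝ} : ∀ {l : List ℝ} {c : ℝ}, (∀ z ∈ l, z = c) → pSum F h l = 0
  | [], _, _ => rfl
  | [x], _, _ => rfl
  | x :: y :: t, c, hc => by
      have hx : x = c := hc x (by simp)
      have hy : y = c := hc y (by simp)
      rw [pSum_cons_cons, pSum_of_const (l := y :: t) (c := c) (fun z hz => hc z (List.mem_cons_of_mem _ hz))]
      rw [hx, hy]; ring

/-- The Young constant. -/
noncomputable def CC (θ : ℝ) : ℝ := 2 / (1 - 2 ^ (1 - θ))

lemma two_rpow_lt_one {θ : ℝ} (hθ : 1 < θ) : (2:ℝ) ^ (1 - θ) < 1 :=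
  Real.rpow_lt_one_of_one_lt_of_neg one_lt_two (by linarith)

lemma CC_pos {θ : ℝ} (hθ : 1 < θ) : 0 < CC θ := by
  have := two_rpow_lt_one hθ
  have h2 : (0:ℝ) < 1 - 2 ^ (1 - θ) := by linarith
  exact div_pos two_pos h2

lemma CC_identity {θ : ℝ} (hθ : 1 < θ) : CC θ * 2 ^ (1 - θ) + 2 = CC θ := by
  have := two_rpow_lt_one hθ
  have h2 : (1:ℝ) - 2 ^ (1 - θ) ≠ 0 := by linarith
  unfold CC
  rw [div_mul_eq_mul_div, div_add' _ _ _ h2, div_left_inj' h2]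
  ring


section Young

variable {F h : ℝ → ℝ} {A B γ δ lo hi : ℝ}

/-- Key sewing estimate: any partition sum is close to the trivial one. -/
lemma key (hγ : 0 < γ) (hδ : 0 < δ) (hθ : 1 < γ + δ) (hA : 0 ≤ A) (hB : 0 ≤ B)
    (hF : ∀ u ∈ Icc lo hi, ∀ v ∈ Icc lo hi, |F v - F u| ≤ A * |v - u| ^ γ)
    (hh : ∀ u ∈ Icc lo hi, ∀ v ∈ Icc lo hi, |h v - h u| ≤ B * |v - u| ^ δ) :
    ∀ (n : ℕ) (l : List ℝ), l ≠ [] → l.length ≤ n → l.Pairwise (· ≤ ·) →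
      (∀ x ∈ l, x ∈ Icc lo hi) →
      |pSum F h l - F (hd l) * (h (lst l) - h (hd l))|
        ≤ CC (γ+δ) * (A*B) * (lst l - hd l) ^ (γ+δ) := by
  intro n
  induction n with
  | zero =>
      intro l hne hlen
      cases l with
      | nil => exact absurd rfl hne
      | cons x t => simp at hlen
  | succ n ih =>
      intro l hne hlen hsort hmem
      set θ := γ + δ with hθdef
      have hθ0 : (0:ℝ) < θ := by positivity
      have hCC := CC_pos hθ
      have hab : hd l ≤ lst l := sorted_lst_le hsort (hd l) (hd_mem hne)
      rcases eq_or_lt_of_le hab with heq | hlt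
      · -- degenerate: all points equal
        have hconst : ∀ z ∈ l, z = hd l := by
          intro z hz
          have h1 := sorted_le_hd hsort hne z hz
          have h2 := sorted_lst_le hsort z hz
          rw [← heq] at h2
          linarith
        rw [pSum_of_const hconst, ← heq, sub_self, mul_zero, sub_zero, abs_zero,
          sub_self, Real.zero_rpow (ne_of_gt hθ0), mul_zero]
      · -- main case
        set a := hd l with ha
        set b := lst l with hb
        set m := (a + b)/2 with hm
        have ham : a < m := by simp only [hm]; linarith
        have hmb : m < b := by simp only [hm]; linarith
        set l₁ := l.takeWhile (fun z => decide (z ≤ m)) with hl₁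
        set l₂ := l.dropWhile (fun z => decide (z ≤ m)) with hl₂
        have hsplit : l₁ ++ l₂ = l := List.takeWhile_append_dropWhile ..
        have hmem₁le : ∀ z ∈ l₁, z ≤ m := by
          intro z hz
          have := List.mem_takeWhile_imp hz
          simpa using this
        have hsub₁ : ∀ z ∈ l₁, z ∈ l := fun z hz => hsplit ▸ List.mem_append_left _ hz
        have hsub₂ : ∀ z ∈ l₂, z ∈ l := fun z hz => hsplit ▸ List.mem_append_right _ hz
        have hsort₁ : l₁.Pairwise (· ≤ ·) := hsort.sublist (List.takeWhile_sublist _)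
        have hsort₂ : l₂.Pairwise (· ≤ ·) := hsort.sublist (List.dropWhile_sublist _)
        have hne₂ : l₂ ≠ [] := by
          intro hcon
          have : ∀ x ∈ l, (fun z => decide (z ≤ m)) x = true := List.dropWhile_eq_nil_iff.1 hcon
          have := this b (lst_mem hne)
          simp at this
          linarith
        have hmem₂gt : ∀ z ∈ l₂, m < z := by
          have h0 : 0 < l₂.length := List.length_pos_iff.2 hne₂
          have hhead : ¬ ((l₂.get ⟨0, h0⟩ : ℝ) ≤ m) := by
            have := List.dropWhile_get_zero_not (fun z => decide (z ≤ m)) l h0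
            simpa using this
          have hget : (l₂.get ⟨0, h0⟩ : ℝ) = hd l₂ :=
            (List.get_mk_zero h0).trans (hd_eq_head l₂ hne₂).symm
          rw [hget] at hhead
          intro z hz
          have hhz : hd l₂ ≤ z := sorted_le_hd hsort₂ hne₂ z hz
          have := lt_of_not_ge hhead
          linarith
        have hne₁ : l₁ ≠ [] := by
          intro hcon
          have : l₂ = l := by rw [← hsplit, hcon]; rfl
          have := hmem₂gt a (this ▸ hd_mem hne)
          linarith
        -- endpoints of the pieces
        set p := lst l₁ with hp
        set q := hd l₂ with hq
        have hpm : p ≤ m := hmem₁le p (lst_mem hne₁)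
        have hmq : m < q := hmem₂gt q (hd_mem hne₂)
        have hap : a ≤ p := sorted_le_hd hsort hne p (hsub₁ p (lst_mem hne₁))
        have hqb : q ≤ b := sorted_lst_le hsort q (hsub₂ q (hd_mem hne₂))
        have hhd₁ : hd l₁ = a := by
          obtain ⟨x, t, hlxt⟩ : ∃ x t, l = x :: t := by
            cases l with
            | nil => exact absurd rfl hne
            | cons x t => exact ⟨x, t, rfl⟩
          have hxa : x = a := by rw [ha, hlxt]; rfl
          have hxm : (x ≤ m) := by rw [hxa]; linarith
          have : l₁ = x :: t.takeWhile (fun z => decide (z ≤ m)) := by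
            rw [hl₁, hlxt, List.takeWhile_cons_of_pos (by simpa using hxm)]
          rw [this, hd_cons, hxa]
        have hlst₂ : lst l₂ = b := by rw [hb, ← hsplit, lst_append _ hne₂]
        -- partition sum splitting
        have hps : pSum F h l = pSum F h l₁ + F p * (h q - h p) + pSum F h l₂ := by
          rw [← hsplit]; exact pSum_append F h l₁ l₂ hne₁ hne₂
        -- induction hypotheses
        have hlen₁ : l₁.length ≤ n := by
          have := hsplit ▸ hlen
          rw [List.length_append] at this
          have h2 : 1 ≤ l₂.length := List.length_pos_iff.2 hne₂
          omega
        have hlen₂ : l₂.length ≤ n := by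
          have := hsplit ▸ hlen
          rw [List.length_append] at this
          have h2 : 1 ≤ l₁.length := List.length_pos_iff.2 hne₁
          omega
        have E1 := ih l₁ hne₁ hlen₁ hsort₁ (fun x hx => hmem x (hsub₁ x hx))
        have E2 := ih l₂ hne₂ hlen₂ hsort₂ (fun x hx => hmem x (hsub₂ x hx))
        rw [hhd₁] at E1
        rw [hlst₂] at E2
        -- Hölder bounds for the bridge terms
        have hmema : a ∈ Icc lo hi := hmem a (hd_mem hne)
        have hmemb : b ∈ Icc lo hi := hmem b (lst_mem hne)
        have hmemp : p ∈ Icc lo hi := hmem p (hsub₁ p (lst_mem hne₁))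
        have hmemq : q ∈ Icc lo hi := hmem q (hsub₂ q (hd_mem hne₂))
        set L := b - a with hL
        have hL0 : 0 < L := by simp only [hL]; linarith
        have habs : ∀ u v : ℝ, a ≤ u → u ≤ v → v ≤ b → |v - u| ^ γ ≤ L ^ γ := by
          intro u v h1 h2 h3
          rw [abs_of_nonneg (by linarith)]
          exact Real.rpow_le_rpow (by linarith) (by simp only [hL]; linarith) (le_of_lt hγ)
        have habs' : ∀ u v : ℝ, a ≤ u → u ≤ v → v ≤ b → |v - u| ^ δ ≤ L ^ δ := by
          intro u v h1 h2 h3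
          rw [abs_of_nonneg (by linarith)]
          exact Real.rpow_le_rpow (by linarith) (by simp only [hL]; linarith) (le_of_lt hδ)
        have hR1 : |(F p - F a) * (h q - h p)| ≤ (A * L ^ γ) * (B * L ^ δ) := by
          rw [abs_mul]
          apply mul_le_mul
          · exact le_trans (hF a hmema p hmemp)
              (by
                have := habs a p (le_refl a) hap (le_trans hpm (le_of_lt hmb))
                exact mul_le_mul_of_nonneg_left this hA)
          · exact le_trans (hh p hmemp q hmemq)
              (by
                have := habs' p q hap (le_of_lt (lt_of_le_of_lt hpm hmq)) hqb
                exact mul_le_mul_of_nonneg_left this hB)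
          · exact abs_nonneg _
          · positivity
        have hR2 : |(F q - F a) * (h b - h q)| ≤ (A * L ^ γ) * (B * L ^ δ) := by
          rw [abs_mul]
          apply mul_le_mul
          · exact le_trans (hF a hmema q hmemq)
              (by
                have := habs a q (le_refl a) (le_trans hap (le_trans hpm (le_of_lt hmq))) hqb
                exact mul_le_mul_of_nonneg_left this hA)
          · exact le_trans (hh q hmemq b hmemb)
              (by
                have := habs' q b (le_trans hap (le_trans hpm (le_of_lt hmq))) hqb (le_refl b)
                exact mul_le_mul_of_nonneg_left this hB)
          · exact abs_nonneg _
          · positivity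
        -- lengths of the pieces
        have hpa : p - a ≤ L/2 := by simp only [hL, hm] at *; linarith
        have hbq : b - q ≤ L/2 := by simp only [hL, hm] at *; linarith
        have hE1' : |pSum F h l₁ - F a * (h p - h a)| ≤ CC θ * (A*B) * (L/2) ^ θ := by
          refine le_trans E1 ?_
          apply mul_le_mul_of_nonneg_left _ (by positivity)
          exact Real.rpow_le_rpow (by linarith) hpa (le_of_lt hθ0)
        have hE2' : |pSum F h l₂ - F q * (h b - h q)| ≤ CC θ * (A*B) * (L/2) ^ θ := by
          refine le_trans E2 ?_
          apply mul_le_mul_of_nonneg_left _ (by positivity)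
          exact Real.rpow_le_rpow (by linarith) hbq (le_of_lt hθ0)
        -- decomposition identity
        have hiden : pSum F h l - F a * (h b - h a)
            = (pSum F h l₁ - F a * (h p - h a)) + (pSum F h l₂ - F q * (h b - h q))
              + ((F p - F a) * (h q - h p) + (F q - F a) * (h b - h q)) := by
          rw [hps]; ring
        -- powers arithmetic
        have hmulpow : L ^ γ * L ^ δ = L ^ θ := (Real.rpow_add hL0 γ δ).symm
        have hhalf : (L/2) ^ θ = L ^ θ * (2:ℝ) ^ (1-θ) / 2 := by
          rw [Real.div_rpow (le_of_lt hL0) (by norm_num)]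
          have h2 : (2:ℝ) ^ (1-θ) * 2 ^ θ = 2 := by
            rw [← Real.rpow_add two_pos]
            norm_num
          have h2pos : (0:ℝ) < 2 ^ θ := Real.rpow_pos_of_pos two_pos θ
          field_simp
          linear_combination -h2
        have hCCiden := CC_identity hθ
        calc |pSum F h l - F a * (h b - h a)|
            ≤ |pSum F h l₁ - F a * (h p - h a)| + |pSum F h l₂ - F q * (h b - h q)|
              + (|(F p - F a) * (h q - h p)| + |(F q - F a) * (h b - h q)|) := by
              rw [hiden]
              exact le_trans (abs_add_le _ _) (by gcongr <;> exact abs_add_le _ _)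
          _ ≤ CC θ * (A*B) * (L/2) ^ θ + CC θ * (A*B) * (L/2) ^ θ
              + ((A * L ^ γ) * (B * L ^ δ) + (A * L ^ γ) * (B * L ^ δ)) := by
              gcongr
          _ = CC θ * (A*B) * (L ^ θ) := by
              rw [hhalf]
              linear_combination (A*B*(L ^ θ)) * hCCiden + (2*A*B) * hmulpow

lemma pow_gap {x y θ μ : ℝ} (hθ1 : 1 ≤ θ) (hxy : x < y) (hyx : y - x ≤ μ) :
    (y - x) ^ θ ≤ μ ^ (θ - 1) * (y - x) := by
  have h0 : (0:ℝ) < y - x := by linarith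
  have h1 : (y - x) ^ θ = (y - x) ^ (θ - 1) * (y - x) ^ (1:ℝ) := by
    rw [← Real.rpow_add h0]; norm_num
  rw [h1, Real.rpow_one]
  apply mul_le_mul_of_nonneg_right _ (le_of_lt h0)
  exact Real.rpow_le_rpow (le_of_lt h0) hyx (by linarith)

lemma pSum_cons_hd (F h : ℝ → ℝ) (y : ℝ) {U₂ : List ℝ} (hne : U₂ ≠ []) :
    pSum F h (y :: U₂) = F y * (h (hd U₂) - h y) + pSum F h U₂ := by
  cases U₂ with
  | nil => exact absurd rfl hne
  | cons u t => rfl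

/-- Refinement estimate: a refinement changes the partition sum by at most
the key estimate on each subinterval. -/
lemma ref (hγ : 0 < γ) (hδ : 0 < δ) (hθ : 1 < γ + δ) (hA : 0 ≤ A) (hB : 0 ≤ B)
    (hF : ∀ u ∈ Icc lo hi, ∀ v ∈ Icc lo hi, |F v - F u| ≤ A * |v - u| ^ γ)
    (hh : ∀ u ∈ Icc lo hi, ∀ v ∈ Icc lo hi, |h v - h u| ≤ B * |v - u| ^ δ)
    {μ : ℝ} (hμ : 0 ≤ μ) :
    ∀ (n : ℕ) (P U : List ℝ), P ≠ [] → P.length ≤ n →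
      P.Pairwise (· < ·) → U.Pairwise (· < ·) →
      (∀ x ∈ P, x ∈ U) → (∀ x ∈ U, x ∈ Icc lo hi) →
      hd U = hd P → lst U = lst P →
      List.IsChain (fun x y => y - x ≤ μ) P →
      |pSum F h U - pSum F h P|
        ≤ CC (γ+δ) * (A*B) * μ ^ ((γ+δ)-1) * (lst P - hd P) := by
  intro n
  induction n with
  | zero =>
      intro P U hne hlen
      cases P with
      | nil => exact absurd rfl hne
      | cons x t => simp at hlen
  | succ n ih =>
      intro P U hPne hlen hPs hUs hPU hUIcc hhd hlst hchain
      set θ := γ + δ with hθdef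
      have hθ0 : (0:ℝ) < θ := by positivity
      have hCC := CC_pos hθ
      have hUne : U ≠ [] := by
        intro hcon
        exact (List.not_mem_nil (a := hd P)) (hcon ▸ hPU (hd P) (hd_mem hPne))
      obtain ⟨x, P₀, hP⟩ : ∃ x P₀, P = x :: P₀ := by
        cases P with
        | nil => exact absurd rfl hPne
        | cons x t => exact ⟨x, t, rfl⟩
      subst hP
      cases P₀ with
      | nil =>
          -- P = [x] : all of U collapses to the point x
          have h1 : hd U = x := by simpa using hhd
          have h2 : lst U = x := by simpa using hlst
          have hconst : ∀ z ∈ U, z = x := fun z hz =>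
            le_antisymm (h2 ▸ sorted_lst_le (hUs.imp le_of_lt) z hz)
              (h1 ▸ sorted_le_hd (hUs.imp le_of_lt) hUne z hz)
          rw [pSum_of_const hconst]
          simp [pSum, sub_self]
      | cons y P' =>
          have hxy : x < y := (List.pairwise_cons.1 hPs).1 y (by simp)
          have hchain' : List.IsChain (fun u v => v - u ≤ μ) (y :: P') := hchain.tail
          have hyxμ : y - x ≤ μ := by
            rcases List.isChain_cons_cons.1 hchain with ⟨h1, _⟩
            exact h1
          set U₁ := U.takeWhile (fun z => decide (z ≤ y)) with hU₁
          set U₂ := U.dropWhile (fun z => decide (z ≤ y)) with hU₂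
          have hsplit : U₁ ++ U₂ = U := List.takeWhile_append_dropWhile ..
          have hU₁mem : ∀ z ∈ U₁, z ≤ y := by
            intro z hz
            have := List.mem_takeWhile_imp hz
            simpa using this
          have hUsle : U.Pairwise (· ≤ ·) := (hUs.imp le_of_lt)
          have hU₂s : U₂.Pairwise (· < ·) := hUs.sublist (List.dropWhile_sublist _)
          have hU₂gt : ∀ z ∈ U₂, y < z := by
            intro z hz
            have hne₂ : U₂ ≠ [] := List.ne_nil_of_mem hz
            have h0 : 0 < U₂.length := List.length_pos_iff.2 hne₂
            have hhead : ¬ ((U₂.get ⟨0, h0⟩ : ℝ) ≤ y) := by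
              have := List.dropWhile_get_zero_not (fun z => decide (z ≤ y)) U h0
              simpa using this
            have hget : (U₂.get ⟨0, h0⟩ : ℝ) = hd U₂ :=
              (List.get_mk_zero h0).trans (hd_eq_head U₂ hne₂).symm
            rw [hget] at hhead
            have hhz : hd U₂ ≤ z := sorted_le_hd (hU₂s.imp le_of_lt) hne₂ z hz
            have := lt_of_not_ge hhead
            linarith
          have hyU : y ∈ U := hPU y (by simp)
          have hyU₁ : y ∈ U₁ := by
            rcases List.mem_append.1 (hsplit ▸ hyU) with h | h
            · exact h
            · exact absurd (hU₂gt y h) (lt_irrefl y)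
          have hU₁ne : U₁ ≠ [] := List.ne_nil_of_mem hyU₁
          have hU₁s : U₁.Pairwise (· < ·) := hUs.sublist (List.takeWhile_sublist _)
          have hlstU₁ : lst U₁ = y := by
            have h1 : lst U₁ ≤ y := hU₁mem _ (lst_mem hU₁ne)
            have h2 : y ≤ lst U₁ := sorted_lst_le (hU₁s.imp le_of_lt) y hyU₁
            linarith
          have hhdU₁ : hd U₁ = x := by
            obtain ⟨u, t, hUxt⟩ : ∃ u t, U = u :: t := by
              cases U with
              | nil => exact absurd rfl hUne
              | cons u t => exact ⟨u, t, rfl⟩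
            have hux : u = x := by
              have := hhd
              rw [hUxt] at this
              simpa using this
            have hum : (u ≤ y) := by rw [hux]; linarith
            have : U₁ = u :: t.takeWhile (fun z => decide (z ≤ y)) := by
              rw [hU₁, hUxt, List.takeWhile_cons_of_pos (by simpa using hum)]
            rw [this, hd_cons, hux]
          have hU₁sub : ∀ z ∈ U₁, z ∈ U := fun z hz => hsplit ▸ List.mem_append_left _ hz
          have hU₂sub : ∀ z ∈ U₂, z ∈ U := fun z hz => hsplit ▸ List.mem_append_right _ hz
          -- the key lemma applied to U₁
          have hkey₁ : |pSum F h U₁ - F x * (h y - h x)|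
              ≤ CC θ * (A*B) * (y - x) ^ θ := by
            have := key hγ hδ hθ hA hB hF hh U₁.length U₁ hU₁ne (le_refl _)
              (hU₁s.imp le_of_lt) (fun z hz => hUIcc z (hU₁sub z hz))
            rw [hhdU₁, hlstU₁] at this
            exact this
          have hkey₁' : |pSum F h U₁ - F x * (h y - h x)|
              ≤ CC θ * (A*B) * (μ ^ (θ-1) * (y - x)) := by
            refine le_trans hkey₁ ?_
            apply mul_le_mul_of_nonneg_left _ (by positivity)
            exact pow_gap (le_of_lt hθ) hxy hyxμ
          cases P' with
          | nil =>
              -- P = [x, y]; then U₂ is empty and U = U₁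
              have hU₂e : U₂ = [] := by
                by_contra hcon
                have h1 := hU₂gt (lst U₂) (lst_mem hcon)
                have h2 : lst U₂ = lst U := by rw [← hsplit, lst_append _ hcon]
                have h3 : lst U = y := by rw [hlst]; rfl
                rw [h2, h3] at h1
                exact lt_irrefl _ h1
              have hUU₁ : U = U₁ := by rw [← hsplit, hU₂e, List.append_nil]
              rw [hUU₁]
              have : pSum F h [x, y] = F x * (h y - h x) := by simp [pSum]
              rw [this]
              simp only [lst_cons_cons, lst_singleton, hd_cons]
              calc |pSum F h U₁ - F x * (h y - h x)|
                  ≤ CC θ * (A*B) * (μ ^ (θ-1) * (y - x)) := hkey₁'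
                _ = CC θ * (A*B) * μ ^ (θ-1) * (y - x) := by ring
          | cons w P'' =>
              -- P' = w :: P'' nonempty
              have hP'ne : (w :: P'') ≠ [] := by simp
              have hylstP : y < lst (y :: w :: P'') := by
                have hmem' : lst (w :: P'') ∈ w :: P'' := lst_mem hP'ne
                have := (List.pairwise_cons.1 (hPs.of_cons)).1 _ hmem'
                simpa using this
              have hU₂ne : U₂ ≠ [] := by
                intro hcon
                have h2 : lst U = lst U₁ := by rw [← hsplit, hcon, List.append_nil]
                have h3 : lst U = lst (y :: w :: P'') := by rw [hlst]; rfl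
                rw [hlstU₁] at h2
                rw [h2] at h3
                exact absurd h3.symm (ne_of_gt hylstP)
              -- decompose both partition sums
              have hpsU : pSum F h U = pSum F h U₁ + pSum F h (y :: U₂) := by
                rw [← hsplit, pSum_append F h U₁ U₂ hU₁ne hU₂ne, hlstU₁,
                  pSum_cons_hd F h y hU₂ne]
                ring
              have hpsP : pSum F h (x :: y :: w :: P'')
                  = F x * (h y - h x) + pSum F h (y :: w :: P'') := rfl
              -- apply the inductive hypothesis to y :: U₂ vs y :: P'
              have hIH : |pSum F h (y :: U₂) - pSum F h (y :: w :: P'')|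
                  ≤ CC θ * (A*B) * μ ^ (θ-1) * (lst (y :: w :: P'') - y) := by
                apply ih (y :: w :: P'') (y :: U₂) (by simp) (by simpa using hlen)
                · exact hPs.of_cons
                · refine List.pairwise_cons.2 ⟨fun z hz => hU₂gt z hz, hU₂s⟩
                · intro z hz
                  rcases List.mem_cons.1 hz with h | h
                  · simp [h]
                  · have hzU : z ∈ U := hPU z (by simp [h])
                    have hzy : y < z := by
                      have := (List.pairwise_cons.1 (hPs.of_cons)).1 z h
                      exact this
                    right
                    rcases List.mem_append.1 (hsplit ▸ hzU) with h' | h'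
                    · exact absurd (hU₁mem z h') (not_le.2 hzy)
                    · exact h'
                · intro z hz
                  rcases List.mem_cons.1 hz with h | h
                  · exact h ▸ hUIcc y hyU
                  · exact hUIcc z (hU₂sub z h)
                · rfl
                · rw [lst_cons y hU₂ne]
                  have h1 : lst U₂ = lst U := by rw [← hsplit, lst_append _ hU₂ne]
                  rw [h1, hlst]
                  rfl
                · exact hchain'
              calc |pSum F h U - pSum F h (x :: y :: w :: P'')|
                  = |(pSum F h U₁ - F x * (h y - h x))
                      + (pSum F h (y :: U₂) - pSum F h (y :: w :: P''))| := by
                    rw [hpsU, hpsP]; ring_nf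
                _ ≤ |pSum F h U₁ - F x * (h y - h x)|
                      + |pSum F h (y :: U₂) - pSum F h (y :: w :: P'')| := abs_add_le _ _
                _ ≤ CC θ * (A*B) * (μ ^ (θ-1) * (y - x))
                      + CC θ * (A*B) * μ ^ (θ-1) * (lst (y :: w :: P'') - y) := by
                    gcongr
                _ = CC θ * (A*B) * μ ^ (θ-1) * (lst (x :: y :: w :: P'') - hd (x :: y :: w :: P'')) := by
                    simp only [lst_cons_cons, hd_cons]
                    ring

end Young

section Grid

variable {F h : ℝ → ℝ}

/-- the uniform grid on `[a,b]` with `n` intervals -/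
noncomputable def grid (a b : ℝ) (n : ℕ) : List ℝ :=
  (List.range (n+1)).map (fun k : ℕ => a + (k:ℝ) * (b - a) / n)

/-- the `n`-th uniform left Riemann–Stieltjes sum -/
noncomputable def Sn (F g : ℝ → ℝ) (a b : ℝ) (n : ℕ) : ℝ :=
  ∑ k ∈ Finset.range n,
    F (a + k * (b - a) / n) * (g (a + (k + 1) * (b - a) / n) - g (a + k * (b - a) / n))

lemma RS_eq_limUnder (f g : ℝ → ℝ) (a b : ℝ) :
    RS f g a b = limUnder Filter.atTop (Sn f g a b) := rfl

lemma grid_ne_nil {a b : ℝ} {n : ℕ} : grid a b n ≠ [] := by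
  simp only [grid]
  intro hcon
  have := congrArg List.length hcon
  simp at this

lemma hd_grid (a b : ℝ) (n : ℕ) : hd (grid a b n) = a := by
  simp only [grid, List.range_succ_eq_map]
  simp

lemma lst_grid {a b : ℝ} {n : ℕ} (hn : n ≠ 0) : lst (grid a b n) = b := by
  have hcast : (n:ℝ) ≠ 0 := Nat.cast_ne_zero.2 hn
  simp only [grid, List.range_succ]
  rw [List.map_append]
  rw [lst_append _ (by simp)]
  simp only [List.map_cons, List.map_nil, lst_singleton]
  field_simp
  ring

lemma grid_sorted {a b : ℝ} {n : ℕ} (hab : a < b) (hn : n ≠ 0) :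
    (grid a b n).Pairwise (· < ·) := by
  apply List.Pairwise.map
  · intro j k hjk
    have hpos : (0:ℝ) < (b - a) / n := by
      apply div_pos (by linarith)
      exact_mod_cast Nat.pos_of_ne_zero hn
    have : (j:ℝ) * (b-a) / n < (k:ℝ) * (b-a) / n := by
      rw [div_lt_div_iff_of_pos_right]
      · apply mul_lt_mul_of_pos_right _ (by linarith)
        exact_mod_cast hjk
      · exact_mod_cast Nat.pos_of_ne_zero hn
    linarith
  · exact List.pairwise_lt_range (n := n+1)

lemma grid_mem_Icc {a b : ℝ} (hab : a ≤ b) (n : ℕ) :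
    ∀ x ∈ grid a b n, x ∈ Icc a b := by
  intro x hx
  simp only [grid, List.mem_map, List.mem_range] at hx
  obtain ⟨k, hk, rfl⟩ := hx
  rw [Set.mem_Icc]
  rcases Nat.eq_zero_or_pos n with hn | hn
  · subst hn
    simp [div_zero, hab]
  · have hnpos : (0:ℝ) < n := by exact_mod_cast hn
    have hkn : (k:ℝ) ≤ n := by
      have : k ≤ n := Nat.lt_succ_iff.1 hk
      exact_mod_cast this
    have h0 : 0 ≤ (k:ℝ) * (b-a) / n := div_nonneg (mul_nonneg (Nat.cast_nonneg k) (by linarith)) (le_of_lt hnpos)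
    have h1 : (k:ℝ) * (b-a) / n ≤ (b-a) := by
      rw [div_le_iff₀ hnpos]
      nlinarith [sub_nonneg.2 hab]
    constructor <;> linarith

lemma grid_chain {a b : ℝ} {n : ℕ} :
    List.IsChain (fun x y => y - x ≤ (b - a) / n) (grid a b n) := by
  simp only [grid]
  rw [List.isChain_map]
  rw [show n + 1 = Nat.succ n from rfl, List.isChain_range_succ]
  intro m hm
  exact le_of_eq (by push_cast; ring)

lemma pSum_map_range : ∀ (n : ℕ) (f : ℕ → ℝ),
    pSum F h ((List.range (n+1)).map f)
      = ∑ k ∈ Finset.range n, F (f k) * (h (f (k+1)) - h (f k)) := by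
  intro n
  induction n with
  | zero => intro f; simp [pSum]
  | succ n ih =>
      intro f
      have hrest : ((List.range (n+2)).map f) = f 0 :: ((List.range (n+1)).map (f ∘ Nat.succ)) := by
        rw [List.range_succ_eq_map]
        simp [List.map_map]
      have hrne : ((List.range (n+1)).map (f ∘ Nat.succ)) ≠ [] := by
        intro hcon
        have := congrArg List.length hcon
        simp at this
      have hhd : hd ((List.range (n+1)).map (f ∘ Nat.succ)) = f 1 := by
        rw [List.range_succ_eq_map]
        simp
      rw [hrest, pSum_cons_hd F h _ hrne, hhd, ih (f ∘ Nat.succ)]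
      rw [Finset.sum_range_succ']
      simp only [Function.comp_apply]
      ring

lemma pSum_grid {a b : ℝ} {n : ℕ} :
    pSum F h (grid a b n) = Sn F h a b n := by
  rw [grid, pSum_map_range, Sn]
  apply Finset.sum_congr rfl
  intro k _
  push_cast
  ring_nf

lemma grid_subset_mul {a b : ℝ} {n m : ℕ} (hn : n ≠ 0) (hm : m ≠ 0) :
    ∀ x ∈ grid a b n, x ∈ grid a b (n*m) := by
  intro x hx
  simp only [grid, List.mem_map, List.mem_range] at hx ⊢
  obtain ⟨k, hk, rfl⟩ := hx
  refine ⟨k * m, ?_, ?_⟩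
  · have : k ≤ n := Nat.lt_succ_iff.1 hk
    calc k * m ≤ n * m := Nat.mul_le_mul_right m this
    _ < n * m + 1 := Nat.lt_succ_self _
  · have hcn : (n:ℝ) ≠ 0 := Nat.cast_ne_zero.2 hn
    have hcm : (m:ℝ) ≠ 0 := Nat.cast_ne_zero.2 hm
    push_cast
    field_simp

end Grid

lemma hd_append {l₁ : List ℝ} (l₂ : List ℝ) (h₁ : l₁ ≠ []) : hd (l₁ ++ l₂) = hd l₁ := by
  cases l₁ with
  | nil => exact absurd rfl h₁
  | cons x t => rfl

lemma hd_eq_min {l : List ℝ} {x : ℝ} (hs : l.Pairwise (· ≤ ·)) (hx : x ∈ l)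
    (hmin : ∀ z ∈ l, x ≤ z) : hd l = x := by
  have hne : l ≠ [] := List.ne_nil_of_mem hx
  exact le_antisymm (sorted_le_hd hs hne x hx) (hmin _ (hd_mem hne))

lemma lst_eq_max {l : List ℝ} {x : ℝ} (hs : l.Pairwise (· ≤ ·)) (hx : x ∈ l)
    (hmax : ∀ z ∈ l, z ≤ x) : lst l = x := by
  have hne : l ≠ [] := List.ne_nil_of_mem hx
  exact le_antisymm (hmax _ (lst_mem hne)) (sorted_lst_le hs x hx)

lemma chain'_glue {r : ℝ → ℝ → Prop} : ∀ (l₁ l₂ : List ℝ), l₁ ≠ [] → l₂ ≠ [] →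
    List.IsChain r l₁ → List.IsChain r l₂ → r (lst l₁) (hd l₂) → List.IsChain r (l₁ ++ l₂)
  | [], _, h, _, _, _, _ => absurd rfl h
  | [x], y :: t, _, _, _, hc₂, hr => by
      exact List.isChain_cons_cons.2 ⟨hr, hc₂⟩
  | x :: y :: t, l₂, _, h₂, hc₁, hc₂, hr => by
      have htail := chain'_glue (y :: t) l₂ (by simp) h₂ hc₁.tail hc₂ (by simpa using hr)
      rw [List.cons_append]
      exact List.isChain_cons_cons.2 ⟨(List.isChain_cons_cons.1 hc₁).1, htail⟩

section Conv

variable {F h : ℝ → ℝ} {A B γ δ lo hi : ℝ}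

/-- RS over a degenerate interval vanishes (for arbitrary integrand/integrator). -/
lemma RS_self (f g : ℝ → ℝ) (a : ℝ) : RS f g a a = 0 := by
  rw [RS_eq_limUnder]
  have hz : Sn f g a a = fun _ => (0:ℝ) := by
    funext n
    simp [Sn]
  rw [hz]
  exact Filter.Tendsto.limUnder_eq tendsto_const_nhds

/-- RS of the constant function 1 telescopes. -/
lemma RS_one (g : ℝ → ℝ) (a b : ℝ) : RS (fun _ => 1) g a b = g b - g a := by
  rw [RS_eq_limUnder]
  apply Filter.Tendsto.limUnder_eq
  refine Filter.Tendsto.congr' ?_ (tendsto_const_nhds : Filter.Tendsto (fun _ : ℕ => g b - g a) Filter.atTop (nhds (g b - g a)))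
  filter_upwards [Filter.eventually_ge_atTop 1] with n hn
  have hn0 : (n:ℝ) ≠ 0 := Nat.cast_ne_zero.2 (by omega)
  have h1 : a + (n:ℝ) * (b - a) / n = b := by field_simp; ring
  have h2 : a + ((0:ℕ):ℝ) * (b - a) / n = a := by push_cast; ring
  have htel := Finset.sum_range_sub (f := fun k : ℕ => g (a + k * (b - a) / n)) n
  rw [h1, h2] at htel
  rw [← htel, Sn]
  apply Finset.sum_congr rfl
  intro k _
  rw [one_mul]
  push_cast
  ring_nf

end Conv

section Conv2

variable {F h : ℝ → ℝ} {A B γ δ lo hi : ℝ}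

lemma Sn_mul_sub (hγ : 0 < γ) (hδ : 0 < δ) (hθ : 1 < γ + δ) (hA : 0 ≤ A) (hB : 0 ≤ B)
    (hF : ∀ u ∈ Icc lo hi, ∀ v ∈ Icc lo hi, |F v - F u| ≤ A * |v - u| ^ γ)
    (hh : ∀ u ∈ Icc lo hi, ∀ v ∈ Icc lo hi, |h v - h u| ≤ B * |v - u| ^ δ)
    {a b : ℝ} (hab : a < b) (hla : lo ≤ a) (hbh : b ≤ hi) {n m : ℕ} (hn : n ≠ 0) (hm : m ≠ 0) :
    |Sn F h a b (n*m) - Sn F h a b n|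
      ≤ CC (γ+δ) * (A*B) * ((b-a)/n) ^ ((γ+δ)-1) * (b-a) := by
  have hIcc : ∀ x ∈ grid a b (n*m), x ∈ Icc lo hi := by
    intro x hx
    have := grid_mem_Icc (le_of_lt hab) (n*m) x hx
    exact ⟨le_trans hla this.1, le_trans this.2 hbh⟩
  have hres := ref hγ hδ hθ hA hB hF hh
    (μ := (b-a)/n) (div_nonneg (by linarith) (Nat.cast_nonneg n))
    (grid a b n).length (grid a b n) (grid a b (n*m))
    grid_ne_nil (le_refl _) (grid_sorted hab hn) (grid_sorted hab (Nat.mul_ne_zero hn hm))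
    (grid_subset_mul hn hm) hIcc
    (by rw [hd_grid, hd_grid]) (by rw [lst_grid (Nat.mul_ne_zero hn hm), lst_grid hn])
    grid_chain
  rw [pSum_grid, pSum_grid, lst_grid hn, hd_grid] at hres
  exact hres

lemma RS_conv (hγ : 0 < γ) (hδ : 0 < δ) (hθ : 1 < γ + δ) (hA : 0 ≤ A) (hB : 0 ≤ B)
    (hF : ∀ u ∈ Icc lo hi, ∀ v ∈ Icc lo hi, |F v - F u| ≤ A * |v - u| ^ γ)
    (hh : ∀ u ∈ Icc lo hi, ∀ v ∈ Icc lo hi, |h v - h u| ≤ B * |v - u| ^ δ)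
    {a b : ℝ} (hab : a < b) (hla : lo ≤ a) (hbh : b ≤ hi) :
    Filter.Tendsto (Sn F h a b) Filter.atTop (nhds (RS F h a b)) ∧
    ∀ n : ℕ, n ≠ 0 →
      |RS F h a b - Sn F h a b n| ≤ CC (γ+δ) * (A*B) * ((b-a)/n) ^ ((γ+δ)-1) * (b-a) := by
  set θ := γ + δ with hθdef
  set bnd : ℕ → ℝ := fun n => CC θ * (A*B) * ((b-a)/n) ^ (θ-1) * (b-a) with hbnd
  have hCC := CC_pos hθ
  have hbnd_anti : ∀ N n : ℕ, N ≠ 0 → N ≤ n → bnd n ≤ bnd N := by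
    intro N n hN hNn
    have hNpos : (0:ℝ) < N := by exact_mod_cast Nat.pos_of_ne_zero hN
    have hnpos : (0:ℝ) < n := lt_of_lt_of_le hNpos (by exact_mod_cast hNn)
    have hdiv : (b-a)/n ≤ (b-a)/N :=
      div_le_div_of_nonneg_left (by linarith) hNpos (by exact_mod_cast hNn)
    have hr := Real.rpow_le_rpow (z := θ-1) (div_nonneg (by linarith) (le_of_lt hnpos))
      hdiv (by linarith)
    apply mul_le_mul_of_nonneg_right _ (by linarith)
    exact mul_le_mul_of_nonneg_left hr (mul_nonneg (le_of_lt hCC) (mul_nonneg hA hB))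
  have hstep : ∀ n m : ℕ, n ≠ 0 → m ≠ 0 → |Sn F h a b (n*m) - Sn F h a b n| ≤ bnd n :=
    fun n m hn hm => Sn_mul_sub hγ hδ hθ hA hB hF hh hab hla hbh hn hm
  have hbnd0 : Filter.Tendsto bnd Filter.atTop (nhds 0) := by
    have h1 : Filter.Tendsto (fun n : ℕ => (b-a)/(n:ℝ)) Filter.atTop (nhds 0) :=
      tendsto_const_div_atTop_nhds_zero_nat (b-a)
    have h2 : Filter.Tendsto (fun n : ℕ => ((b-a)/(n:ℝ)) ^ (θ-1)) Filter.atTop (nhds 0) := by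
      have hc := (Real.continuousAt_rpow_const 0 (θ-1) (Or.inr (by linarith))).tendsto
      have h3 := hc.comp h1
      simpa [Function.comp_def, Real.zero_rpow (show θ-1 ≠ 0 by linarith)] using h3
    have h3 := (h2.const_mul (CC θ * (A*B))).mul_const (b-a)
    simpa [hbnd] using h3
  have hcauchy : CauchySeq (Sn F h a b) := by
    rw [Metric.cauchySeq_iff']
    intro ε hε
    have hev : ∀ᶠ n : ℕ in Filter.atTop, bnd n < ε/2 :=
      hbnd0.eventually_lt_const (by linarith)
    obtain ⟨N, hN1, hN2⟩ : ∃ N : ℕ, 1 ≤ N ∧ bnd N < ε/2 := by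
      obtain ⟨N, hN⟩ := ((Filter.eventually_ge_atTop 1).and hev).exists
      exact ⟨N, hN.1, hN.2⟩
    refine ⟨N, fun n hn => ?_⟩
    have hn0 : n ≠ 0 := by omega
    have hN0 : N ≠ 0 := by omega
    rw [Real.dist_eq]
    have t1 : |Sn F h a b (n*N) - Sn F h a b n| ≤ bnd n := hstep n N hn0 hN0
    have t2 : |Sn F h a b (N*n) - Sn F h a b N| ≤ bnd N := hstep N n hN0 hn0
    rw [show N*n = n*N from Nat.mul_comm N n] at t2
    have t3 : bnd n ≤ bnd N := hbnd_anti N n hN0 hn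
    have t4 : |Sn F h a b n - Sn F h a b N|
        ≤ |Sn F h a b n - Sn F h a b (n*N)| + |Sn F h a b (n*N) - Sn F h a b N| :=
      abs_sub_le _ _ _
    rw [abs_sub_comm (Sn F h a b n) (Sn F h a b (n*N))] at t4
    linarith
  obtain ⟨L, hL⟩ := cauchySeq_tendsto_of_complete hcauchy
  have hRS : RS F h a b = L := by rw [RS_eq_limUnder]; exact hL.limUnder_eq
  constructor
  · rw [hRS]; exact hL
  · intro n hn0
    rw [hRS]
    have hmul : Filter.Tendsto (fun m : ℕ => n*m) Filter.atTop Filter.atTop :=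
      Filter.tendsto_atTop_mono
        (fun m => Nat.le_mul_of_pos_left m (Nat.pos_of_ne_zero hn0)) Filter.tendsto_id
    have hsubseq : Filter.Tendsto (fun m : ℕ => Sn F h a b (n*m)) Filter.atTop (nhds L) :=
      hL.comp hmul
    have habs : Filter.Tendsto (fun m : ℕ => |Sn F h a b (n*m) - Sn F h a b n|)
        Filter.atTop (nhds (|L - Sn F h a b n|)) := (hsubseq.sub tendsto_const_nhds).abs
    apply le_of_tendsto habs
    filter_upwards [Filter.eventually_ge_atTop 1] with m hm
    exact hstep n m hn0 (by omega)

lemma Sn_one (a b : ℝ) : Sn F h a b 1 = F a * (h b - h a) := by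
  rw [Sn, Finset.sum_range_one]
  norm_num

lemma RS_triv (hγ : 0 < γ) (hδ : 0 < δ) (hθ : 1 < γ + δ) (hA : 0 ≤ A) (hB : 0 ≤ B)
    (hF : ∀ u ∈ Icc lo hi, ∀ v ∈ Icc lo hi, |F v - F u| ≤ A * |v - u| ^ γ)
    (hh : ∀ u ∈ Icc lo hi, ∀ v ∈ Icc lo hi, |h v - h u| ≤ B * |v - u| ^ δ)
    {a b : ℝ} (hab : a < b) (hla : lo ≤ a) (hbh : b ≤ hi) :
    |RS F h a b - F a * (h b - h a)| ≤ CC (γ+δ) * (A*B) * (b-a) ^ (γ+δ) := by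
  have hres := (RS_conv hγ hδ hθ hA hB hF hh hab hla hbh).2 1 one_ne_zero
  rw [Sn_one] at hres
  refine le_trans hres (le_of_eq ?_)
  have hba : (0:ℝ) < b - a := by linarith
  have hpow : (b-a) ^ ((γ+δ)-1) * (b-a) = (b-a) ^ (γ+δ) := by
    calc (b-a) ^ ((γ+δ)-1) * (b-a) = (b-a) ^ ((γ+δ)-1) * (b-a) ^ (1:ℝ) := by
          rw [Real.rpow_one]
      _ = (b-a) ^ ((γ+δ)-1+1) := (Real.rpow_add hba _ _).symm
      _ = (b-a) ^ (γ+δ) := by norm_num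
  rw [Nat.cast_one, div_one, mul_assoc (CC (γ+δ) * (A*B)), hpow]

lemma RS_chasles (hγ : 0 < γ) (hδ : 0 < δ) (hθ : 1 < γ + δ) (hA : 0 ≤ A) (hB : 0 ≤ B)
    (hF : ∀ u ∈ Icc lo hi, ∀ v ∈ Icc lo hi, |F v - F u| ≤ A * |v - u| ^ γ)
    (hh : ∀ u ∈ Icc lo hi, ∀ v ∈ Icc lo hi, |h v - h u| ≤ B * |v - u| ^ δ)
    {a c b : ℝ} (hac : a < c) (hcb : c < b) (hla : lo ≤ a) (hbh : b ≤ hi) :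
    RS F h a b = RS F h a c + RS F h c b := by
  set θ := γ + δ with hθdef
  have hCC := CC_pos hθ
  have hab : a < b := lt_trans hac hcb
  have key₂ : ∀ n : ℕ, n ≠ 0 →
      |Sn F h a b n - (Sn F h a c n + Sn F h c b n)|
        ≤ 2 * (CC θ * (A*B) * ((b-a)/n) ^ (θ-1) * (b-a)) := by
    intro n hn
    have hμ0 : (0:ℝ) ≤ (b-a)/n := div_nonneg (by linarith) (Nat.cast_nonneg n)
    obtain ⟨t2, hG2⟩ : ∃ t, grid c b n = c :: t := by
      have hhd := hd_grid c b n
      cases hg : grid c b n with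
      | nil => exact absurd hg grid_ne_nil
      | cons x t =>
          rw [hg] at hhd
          simp only [hd_cons] at hhd
          exact ⟨t, by rw [hhd]⟩
    have hlen2 : (grid c b n).length = n + 1 := by simp [grid]
    have ht2ne : t2 ≠ [] := by
      intro hcon
      rw [hG2, hcon] at hlen2
      simp at hlen2
      omega
    have hsort2 := grid_sorted hcb hn
    rw [hG2] at hsort2
    have ht2s : t2.Pairwise (· < ·) := hsort2.of_cons
    have ht2gt : ∀ z ∈ t2, c < z := fun z hz => (List.pairwise_cons.1 hsort2).1 z hz
    have ht2sub : ∀ z ∈ t2, z ∈ grid c b n := by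
      intro z hz; rw [hG2]; exact List.mem_cons_of_mem _ hz
    -- the three grids, the coarse partitions and the common refinement
    set Q : List ℝ := grid a c n ++ t2 with hQ
    set T : Finset ℝ :=
      ((grid a c n).toFinset ∪ (grid c b n).toFinset) ∪ (grid a b n).toFinset with hT
    set U : List ℝ := T.sort (· ≤ ·) with hU
    have hUs : U.Pairwise (· < ·) := T.sortedLT_sort.pairwise
    have hmemTU : ∀ z, z ∈ U ↔ (z ∈ grid a c n ∨ z ∈ grid c b n ∨ z ∈ grid a b n) := by
      intro z
      rw [hU, Finset.mem_sort, hT]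
      simp [Finset.mem_union, List.mem_toFinset, or_assoc]
    have hUb : ∀ z ∈ U, z ∈ Icc a b := by
      intro z hz
      rcases (hmemTU z).1 hz with h1 | h1 | h1
      · have := grid_mem_Icc (le_of_lt hac) n z h1
        exact ⟨this.1, le_trans this.2 (le_of_lt hcb)⟩
      · have := grid_mem_Icc (le_of_lt hcb) n z h1
        exact ⟨le_trans (le_of_lt hac) this.1, this.2⟩
      · exact grid_mem_Icc (le_of_lt hab) n z h1
    have hUIcc : ∀ z ∈ U, z ∈ Icc lo hi := by
      intro z hz
      have := hUb z hz
      exact ⟨le_trans hla this.1, le_trans this.2 hbh⟩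
    have haU : a ∈ U := (hmemTU a).2 (Or.inr (Or.inr (by
      have hmm := hd_mem (l := grid a b n) grid_ne_nil
      rwa [hd_grid] at hmm)))
    have hbU : b ∈ U := (hmemTU b).2 (Or.inr (Or.inr (by
      have hmm := lst_mem (l := grid a b n) grid_ne_nil
      rwa [lst_grid hn] at hmm)))
    have hdU : hd U = a := hd_eq_min (hUs.imp le_of_lt) haU (fun z hz => (hUb z hz).1)
    have lstU : lst U = b := lst_eq_max (hUs.imp le_of_lt) hbU (fun z hz => (hUb z hz).2)
    -- facts about Q
    have hG1mem := grid_mem_Icc (le_of_lt hac) n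
    have hQs : Q.Pairwise (· < ·) := by
      rw [hQ]
      exact (List.pairwise_append).2 ⟨grid_sorted hac hn, ht2s,
        fun x hx y hy => lt_of_le_of_lt (hG1mem x hx).2 (ht2gt y hy)⟩
    have hQne : Q ≠ [] := by
      rw [hQ]
      intro hcon
      exact grid_ne_nil (List.append_eq_nil_iff.1 hcon).1
    have hdQ : hd Q = a := by rw [hQ, hd_append _ grid_ne_nil, hd_grid]
    have lstQ : lst Q = b := by
      rw [hQ, lst_append _ ht2ne]
      have : lst t2 = lst (c :: t2) := (lst_cons c ht2ne).symm
      rw [this, ← hG2, lst_grid hn]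
    have hQsub : ∀ z ∈ Q, z ∈ U := by
      intro z hz
      rcases List.mem_append.1 (hQ ▸ hz) with h1 | h1
      · exact (hmemTU z).2 (Or.inl h1)
      · exact (hmemTU z).2 (Or.inr (Or.inl (ht2sub z h1)))
    have hG3sub : ∀ z ∈ grid a b n, z ∈ U := fun z hz => (hmemTU z).2 (Or.inr (Or.inr hz))
    -- chains
    have hchain3 : List.IsChain (fun x y => y - x ≤ (b-a)/n) (grid a b n) := grid_chain
    have hdivac : (c-a)/(n:ℝ) ≤ (b-a)/n :=
      div_le_div_of_nonneg_right (by linarith) (Nat.cast_nonneg n)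
    have hdivcb : (b-c)/(n:ℝ) ≤ (b-a)/n :=
      div_le_div_of_nonneg_right (by linarith) (Nat.cast_nonneg n)
    have hchain2 : List.IsChain (fun x y => y - x ≤ (b-a)/n) (c :: t2) := by
      have := grid_chain (a := c) (b := b) (n := n)
      rw [hG2] at this
      exact this.imp (fun x y hxy => le_trans hxy hdivcb)
    have hchainQ : List.IsChain (fun x y => y - x ≤ (b-a)/n) Q := by
      rw [hQ]
      apply chain'_glue _ _ grid_ne_nil ht2ne
      · exact (grid_chain (a := a) (b := c) (n := n)).imp (fun x y hxy => le_trans hxy hdivac)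
      · exact hchain2.tail
      · obtain ⟨x2, t2', hx2⟩ : ∃ x2 t2', t2 = x2 :: t2' := by
          cases t2 with
          | nil => exact absurd rfl ht2ne
          | cons x2 t2' => exact ⟨x2, t2', rfl⟩
        rw [lst_grid hn]
        rw [hx2] at hchain2 ⊢
        exact (List.isChain_cons_cons.1 hchain2).1
    -- refinement estimates
    have r1 := ref hγ hδ hθ hA hB hF hh hμ0 Q.length Q U hQne (le_refl _)
      hQs hUs hQsub hUIcc (by rw [hdU, hdQ]) (by rw [lstU, lstQ]) hchainQ
    have r2 := ref hγ hδ hθ hA hB hF hh hμ0 (grid a b n).length (grid a b n) U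
      grid_ne_nil (le_refl _) (grid_sorted hab hn) hUs hG3sub hUIcc
      (by rw [hdU, hd_grid]) (by rw [lstU, lst_grid hn]) hchain3
    rw [lstQ, hdQ] at r1
    rw [lst_grid hn, hd_grid] at r2
    -- pSum over Q splits
    have hpsQ : pSum F h Q = Sn F h a c n + Sn F h c b n := by
      have e1 : pSum F h Q
          = pSum F h (grid a c n) + F c * (h (hd t2) - h c) + pSum F h t2 := by
        rw [hQ, pSum_append F h _ _ grid_ne_nil ht2ne, lst_grid hn]
      have e2 : pSum F h (grid c b n) = F c * (h (hd t2) - h c) + pSum F h t2 := by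
        rw [hG2]; exact pSum_cons_hd F h c ht2ne
      rw [e1, ← pSum_grid (a := a) (b := c) (n := n), ← pSum_grid (a := c) (b := b) (n := n), e2]
      ring
    rw [hpsQ] at r1
    rw [pSum_grid] at r2
    calc |Sn F h a b n - (Sn F h a c n + Sn F h c b n)|
        ≤ |pSum F h U - Sn F h a b n| + |pSum F h U - (Sn F h a c n + Sn F h c b n)| := by
          rw [abs_sub_comm (pSum F h U) (Sn F h a b n)]
          exact abs_sub_le _ _ _
      _ ≤ CC θ * (A*B) * ((b-a)/n) ^ (θ-1) * (b-a)
            + CC θ * (A*B) * ((b-a)/n) ^ (θ-1) * (b-a) := add_le_add r2 r1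
      _ = 2 * (CC θ * (A*B) * ((b-a)/n) ^ (θ-1) * (b-a)) := by ring
  -- pass to the limit
  have hconv3 := (RS_conv hγ hδ hθ hA hB hF hh hab hla hbh).1
  have hconv1 := (RS_conv hγ hδ hθ hA hB hF hh hac hla (le_trans (le_of_lt hcb) hbh)).1
  have hconv2 := (RS_conv hγ hδ hθ hA hB hF hh hcb (le_trans hla (le_of_lt hac)) hbh).1
  have hD : Filter.Tendsto (fun n => Sn F h a b n - (Sn F h a c n + Sn F h c b n))
      Filter.atTop (nhds (RS F h a b - (RS F h a c + RS F h c b))) :=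
    hconv3.sub (hconv1.add hconv2)
  have hbnd0 : Filter.Tendsto (fun n : ℕ => 2 * (CC θ * (A*B) * ((b-a)/n) ^ (θ-1) * (b-a)))
      Filter.atTop (nhds 0) := by
    have h1 : Filter.Tendsto (fun n : ℕ => (b-a)/(n:ℝ)) Filter.atTop (nhds 0) :=
      tendsto_const_div_atTop_nhds_zero_nat (b-a)
    have h2 : Filter.Tendsto (fun n : ℕ => ((b-a)/(n:ℝ)) ^ (θ-1)) Filter.atTop (nhds 0) := by
      have hc := (Real.continuousAt_rpow_const 0 (θ-1) (Or.inr (by linarith))).tendsto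
      have h3 := hc.comp h1
      simpa [Function.comp_def, Real.zero_rpow (show θ-1 ≠ 0 by linarith)] using h3
    have h3 := (((h2.const_mul (CC θ * (A*B))).mul_const (b-a)).const_mul 2)
    simpa using h3
  have hD0 : Filter.Tendsto (fun n => Sn F h a b n - (Sn F h a c n + Sn F h c b n))
      Filter.atTop (nhds 0) := by
    apply squeeze_zero_norm' _ hbnd0
    filter_upwards [Filter.eventually_ge_atTop 1] with n hn
    exact key₂ n (by omega)
  have := tendsto_nhds_unique hD hD0
  linarith [this]

lemma RS_increment (hγ : 0 < γ) (hδ : 0 < δ) (hθ : 1 < γ + δ) (hA : 0 ≤ A) (hB : 0 ≤ B)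
    (hF : ∀ u ∈ Icc lo hi, ∀ v ∈ Icc lo hi, |F v - F u| ≤ A * |v - u| ^ γ)
    (hh : ∀ u ∈ Icc lo hi, ∀ v ∈ Icc lo hi, |h v - h u| ≤ B * |v - u| ^ δ)
    {t t' : ℝ} (ht : t ∈ Icc lo hi) (ht' : t' ∈ Icc lo hi) (htt' : t ≤ t') :
    |RS F h lo t' - RS F h lo t|
      ≤ (|F lo| + (1 + CC (γ+δ)) * A * (hi - lo) ^ γ) * (B * (t' - t) ^ δ) := by
  set θ := γ + δ with hθdef
  have hCC := CC_pos hθ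
  have hlohi : lo ≤ hi := le_trans ht.1 ht.2
  have hlomem : lo ∈ Icc lo hi := ⟨le_refl _, hlohi⟩
  have hpow_nonneg : 0 ≤ (hi - lo) ^ γ := Real.rpow_nonneg (by linarith) γ
  rcases eq_or_lt_of_le htt' with heq | hlt
  · rw [heq, sub_self, abs_zero, sub_self, Real.zero_rpow (ne_of_gt hδ), mul_zero, mul_zero]
  · rcases eq_or_lt_of_le ht.1 with hlot | hlot
    · -- t = lo
      have hlot' : lo < t' := by rw [hlot]; exact hlt
      have hδpow : 0 ≤ (t' - lo) ^ δ := Real.rpow_nonneg (by linarith) δ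
      have hRSt : RS F h lo t = 0 := by rw [← hlot]; exact RS_self F h lo
      rw [hRSt, sub_zero]
      have h1 := RS_triv hγ hδ hθ hA hB hF hh hlot' (le_refl lo) ht'.2
      have h2 : |F lo * (h t' - h lo)| ≤ |F lo| * (B * (t' - lo) ^ δ) := by
        rw [abs_mul]
        apply mul_le_mul_of_nonneg_left _ (abs_nonneg _)
        have hha := hh lo hlomem t' ht'
        rwa [abs_of_nonneg (show (0:ℝ) ≤ t' - lo by linarith)] at hha
      have h3 : (t' - lo) ^ θ ≤ (hi - lo) ^ γ * (t' - lo) ^ δ := by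
        rw [Real.rpow_add (by linarith) γ δ]
        apply mul_le_mul_of_nonneg_right _ hδpow
        exact Real.rpow_le_rpow (by linarith) (by linarith [ht'.2]) (le_of_lt hγ)
      have h4 : |RS F h lo t'|
          ≤ |RS F h lo t' - F lo * (h t' - h lo)| + |F lo * (h t' - h lo)| := by
        calc |RS F h lo t'|
            = |(RS F h lo t' - F lo * (h t' - h lo)) + F lo * (h t' - h lo)| := by
              congr 1; ring
          _ ≤ _ := abs_add_le _ _
      rw [← hlot]
      calc |RS F h lo t'|
          ≤ CC θ * (A*B) * (t'-lo) ^ θ + |F lo| * (B * (t'-lo) ^ δ) :=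
            le_trans h4 (add_le_add h1 h2)
        _ ≤ CC θ * (A*B) * ((hi-lo) ^ γ * (t'-lo) ^ δ) + |F lo| * (B * (t'-lo) ^ δ) := by
            apply add_le_add_left
            exact mul_le_mul_of_nonneg_left h3
              (mul_nonneg (le_of_lt hCC) (mul_nonneg hA hB))
        _ = (|F lo| + CC θ * A * (hi-lo) ^ γ) * (B * (t'-lo) ^ δ) := by ring
        _ ≤ (|F lo| + (1 + CC θ) * A * (hi-lo) ^ γ) * (B * (t'-lo) ^ δ) := by
            apply mul_le_mul_of_nonneg_right _ (mul_nonneg hB hδpow)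
            nlinarith [mul_nonneg hA hpow_nonneg]
    · -- lo < t
      rw [RS_chasles hγ hδ hθ hA hB hF hh hlot hlt (le_refl lo) ht'.2, add_sub_cancel_left]
      have hδpow : 0 ≤ (t' - t) ^ δ := Real.rpow_nonneg (by linarith) δ
      have h1 := RS_triv hγ hδ hθ hA hB hF hh hlt ht.1 ht'.2
      have hFt : |F t| ≤ |F lo| + A * (hi-lo) ^ γ := by
        have habs2 := hF lo hlomem t ht
        have habs3 : |t - lo| ^ γ ≤ (hi - lo) ^ γ := by
          rw [abs_of_nonneg (by linarith [ht.1])]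
          exact Real.rpow_le_rpow (by linarith [ht.1]) (by linarith [ht.2]) (le_of_lt hγ)
        have habs4 : |F t| - |F lo| ≤ |F t - F lo| := abs_sub_abs_le_abs_sub _ _
        have habs5 := mul_le_mul_of_nonneg_left habs3 hA
        linarith
      have h2 : |F t * (h t' - h t)| ≤ (|F lo| + A * (hi-lo) ^ γ) * (B * (t' - t) ^ δ) := by
        rw [abs_mul]
        apply mul_le_mul hFt _ (abs_nonneg _) (by positivity)
        have hha := hh t ht t' ht'
        rwa [abs_of_nonneg (show (0:ℝ) ≤ t' - t by linarith)] at hha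
      have h3 : (t' - t) ^ θ ≤ (hi - lo) ^ γ * (t' - t) ^ δ := by
        rw [Real.rpow_add (by linarith) γ δ]
        apply mul_le_mul_of_nonneg_right _ hδpow
        exact Real.rpow_le_rpow (by linarith) (by linarith [ht.1, ht'.2]) (le_of_lt hγ)
      have h4 : |RS F h t t'|
          ≤ |RS F h t t' - F t * (h t' - h t)| + |F t * (h t' - h t)| := by
        calc |RS F h t t'|
            = |(RS F h t t' - F t * (h t' - h t)) + F t * (h t' - h t)| := by
              congr 1; ring
          _ ≤ _ := abs_add_le _ _
      calc |RS F h t t'|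
          ≤ CC θ * (A*B) * (t'-t) ^ θ + (|F lo| + A * (hi-lo) ^ γ) * (B * (t' - t) ^ δ) :=
            le_trans h4 (add_le_add h1 h2)
        _ ≤ CC θ * (A*B) * ((hi-lo) ^ γ * (t'-t) ^ δ)
              + (|F lo| + A * (hi-lo) ^ γ) * (B * (t' - t) ^ δ) := by
            apply add_le_add_left
            exact mul_le_mul_of_nonneg_left h3
              (mul_nonneg (le_of_lt hCC) (mul_nonneg hA hB))
        _ = (|F lo| + (1 + CC θ) * A * (hi-lo) ^ γ) * (B * (t' - t) ^ δ) := by ring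

end Conv2

end YoungAux

open YoungAux in
/-- Lemma 8.1: bound for iterated Young integrals. If `g^j` is `β_j`-Hölder on `[s,s']` with
`β_j ∈ (1/2,1]`, then for `t ≤ t'` in `[s,s']`,
`|g^α_{s,t'} − g^α_{s,t}| ≤ K (Π_j ‖g^j‖_{β_j}) (s'−s)^{β₁+⋯+β_{r-1}} (t'−t)^{β_r}`,
where `K` depends only on `r` and the exponents. Here the innermost integrator carries
index `0` and the outermost carries index `Fin.last r`. -/
theorem iterated_integral_increment_bound (r : ℕ) (β : Fin (r + 1) → ℝ)
    (hβ : ∀ j, 1 / 2 < β j ∧ β j ≤ 1) :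
    ∃ K : ℝ, 0 < K ∧ ∀ (s s' : ℝ) (g : Fin (r + 1) → ℝ → ℝ) (C : Fin (r + 1) → ℝ),
      s ≤ s' →
      (∀ j, ∀ u ∈ Set.Icc s s', ∀ v ∈ Set.Icc s s',
        |g j v - g j u| ≤ C j * |v - u| ^ β j) →
      ∀ t ∈ Set.Icc s s', ∀ t' ∈ Set.Icc s s', t ≤ t' →
      |iterRS (r + 1) g s t' - iterRS (r + 1) g s t|
        ≤ K * (∏ j, C j)
            * (s' - s) ^ (∑ j ∈ Finset.univ.erase (Fin.last r), β j)
            * (t' - t) ^ β (Fin.last r) := by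
  induction r with
  | zero =>
      refine ⟨1, one_pos, ?_⟩
      intro s s' g C hss' hHold t ht t' ht' htt'
      have hRS1 : ∀ b : ℝ, iterRS 1 g s b = g (Fin.last 0) b - g (Fin.last 0) s := by
        intro b
        show RS (fun u => iterRS 0 (fun i => g i.castSucc) s u) (g (Fin.last 0)) s b = _
        exact RS_one (g (Fin.last 0)) s b
      rw [hRS1, hRS1]
      have herase : (Finset.univ.erase (Fin.last 0)) = (∅ : Finset (Fin 1)) := by
        decide
      rw [herase, Finset.sum_empty, Real.rpow_zero]
      have hb := hHold (Fin.last 0) t ht t' ht'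
      rw [abs_of_nonneg (show (0:ℝ) ≤ t' - t by linarith)] at hb
      have heqg : g (Fin.last 0) t' - g (Fin.last 0) s - (g (Fin.last 0) t - g (Fin.last 0) s)
          = g (Fin.last 0) t' - g (Fin.last 0) t := by ring
      rw [heqg]
      have hprod : (∏ j, C j) = C (Fin.last 0) := by
        rw [show (Fin.last 0) = (0 : Fin 1) from rfl]
        exact Fin.prod_univ_one C
      rw [hprod]
      calc |g (Fin.last 0) t' - g (Fin.last 0) t|
          ≤ C (Fin.last 0) * (t' - t) ^ β (Fin.last 0) := hb
        _ = 1 * C (Fin.last 0) * 1 * (t' - t) ^ β (Fin.last 0) := by ring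
  | succ r IH =>
      obtain ⟨K, hK, hbound⟩ := IH (fun j => β j.castSucc) (fun j => hβ j.castSucc)
      have hγpair := hβ ((Fin.last r).castSucc)
      have hδpair := hβ (Fin.last (r+1))
      set γ : ℝ := β ((Fin.last r).castSucc) with hγdef
      set δ : ℝ := β (Fin.last (r+1)) with hδdef
      have hγ0 : 0 < γ := by linarith [hγpair.1]
      have hδ0 : 0 < δ := by linarith [hδpair.1]
      have hθ : 1 < γ + δ := by linarith [hγpair.1, hδpair.1]
      have hCC := CC_pos hθ
      refine ⟨(1 + CC (γ + δ)) * K, mul_pos (by linarith) hK, ?_⟩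
      intro s s' g C hss' hHold t ht t' ht' htt'
      rcases eq_or_lt_of_le hss' with hseq | hslt
      · have hts : t = s := le_antisymm (hseq ▸ ht.2) ht.1
        have ht's : t' = s := le_antisymm (hseq ▸ ht'.2) ht'.1
        rw [hts, ht's, sub_self, abs_zero,
          show s - s = (0:ℝ) from sub_self s, Real.zero_rpow (ne_of_gt hδ0), mul_zero]
      · have hC : ∀ j, 0 ≤ C j := by
          intro j
          have h1 := hHold j s (Set.left_mem_Icc.2 hss') s' (Set.right_mem_Icc.2 hss')
          have hp : 0 < |s' - s| ^ (β j) := by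
            apply Real.rpow_pos_of_pos
            rw [abs_of_pos (by linarith)]
            linarith
          by_contra hneg
          push_neg at hneg
          have h2 : C j * |s' - s| ^ (β j) < 0 := mul_neg_of_neg_of_pos hneg hp
          have h3 := abs_nonneg (g j s' - g j s)
          linarith
        set Fm : ℝ → ℝ := fun u => iterRS (r+1) (fun i => g i.castSucc) s u with hFmdef
        set A : ℝ := K * (∏ j : Fin (r+1), C j.castSucc)
            * (s' - s) ^ (∑ j ∈ Finset.univ.erase (Fin.last r), β j.castSucc) with hAdef
        have hA0 : 0 ≤ A := by
          apply mul_nonneg (mul_nonneg (le_of_lt hK) (Finset.prod_nonneg fun j _ => hC _))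
          exact Real.rpow_nonneg (by linarith) _
        have hFHold : ∀ u ∈ Set.Icc s s', ∀ v ∈ Set.Icc s s',
            |Fm v - Fm u| ≤ A * |v - u| ^ γ := by
          intro u hu v hv
          rcases le_total u v with huv | hvu
          · have hb := hbound s s' (fun i => g i.castSucc) (fun i => C i.castSucc) hss'
              (fun j => hHold j.castSucc) u hu v hv huv
            rw [abs_of_nonneg (show (0:ℝ) ≤ v - u by linarith)]
            exact hb
          · have hb := hbound s s' (fun i => g i.castSucc) (fun i => C i.castSucc) hss'
              (fun j => hHold j.castSucc) v hv u hu hvu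
            rw [abs_sub_comm (Fm v) (Fm u), abs_sub_comm v u,
              abs_of_nonneg (show (0:ℝ) ≤ u - v by linarith)]
            exact hb
        have hFm0 : Fm s = 0 := RS_self _ _ s
        have hinc := RS_increment hγ0 hδ0 hθ hA0 (hC (Fin.last (r+1))) hFHold
          (fun u hu v hv => hHold (Fin.last (r+1)) u hu v hv) ht ht' htt'
        rw [hFm0, abs_zero, zero_add] at hinc
        have hiter : ∀ b : ℝ, iterRS (r+2) g s b = RS Fm (g (Fin.last (r+1))) s b :=
          fun b => rfl
        rw [hiter, hiter]
        refine le_trans hinc (le_of_eq ?_)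
        have hsum2 : (∑ j ∈ Finset.univ.erase (Fin.last r), β j.castSucc) + γ
            = ∑ j : Fin (r+1), β j.castSucc := by
          rw [hγdef]
          exact Finset.sum_erase_add _ _ (Finset.mem_univ _)
        have hsum1 : (∑ j ∈ Finset.univ.erase (Fin.last (r+1)), β j)
            = ∑ j : Fin (r+1), β j.castSucc := by
          have e1 := Fin.sum_univ_castSucc (f := β)
          have e2 := Finset.sum_erase_add Finset.univ β (Finset.mem_univ (Fin.last (r+1)))
          linarith
        have hprod : (∏ j, C j) = (∏ j : Fin (r+1), C j.castSucc) * C (Fin.last (r+1)) :=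
          Fin.prod_univ_castSucc C
        have hpow : (s' - s) ^ (∑ j ∈ Finset.univ.erase (Fin.last r), β j.castSucc)
              * (s' - s) ^ γ
            = (s' - s) ^ (∑ j ∈ Finset.univ.erase (Fin.last (r+1)), β j) := by
          rw [← Real.rpow_add (by linarith), hsum2, hsum1]
        rw [hprod, ← hpow, hAdef]
        ring
end

section
/- Let β, β' ∈ (0,1) with β + β' > 1, let x ∈ C^{β'}([0,T]), V ∈ C¹_b(ℝ^m), and y : [0,T] → ℝ^m a function with finite discrete Hölder seminorm ‖y‖_{β,n} over the uniform partition D = {kT/n}. Then for s, t ∈ D with s < t, |∫_s^t V(y_{η(r)}) dx_r| ≤ K [1 + ‖y‖_{s,t,β,n} (t−s)^β] ‖x‖_{β'} (t−s)^{β'}, where η(r) is the left endpoint of the partition interval containing r, and K depends on β, β', ‖V‖_∞, ‖∂V‖_∞. -/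
/-- `η(t)` is the left endpoint `t_k = kT/n` of the partition interval containing `t`. -/
noncomputable def etaFn (T : ℝ) (n : ℕ) (t : ℝ) : ℝ := (⌊t * n / T⌋₊ : ℝ) * T / n

open Filter Finset Topology
set_option maxHeartbeats 1000000

lemma young_discrete (β β' : ℝ) (hβ0 : 0 < β) (hβ'0 : 0 < β') (hββ' : 1 < β + β')
    (h0 : ℝ) (hh0 : 0 < h0) (F X : ℕ → ℝ) (LF LX : ℝ) (hLF : 0 ≤ LF) (hLX : 0 ≤ LX)
    (a b : ℕ)
    (hF : ∀ i j : ℕ, a ≤ i → i ≤ j → j ≤ b → |F j - F i| ≤ LF * (((j - i : ℕ) : ℝ) * h0) ^ β)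
    (hX : ∀ i j : ℕ, a ≤ i → i ≤ j → j ≤ b → |X j - X i| ≤ LX * (((j - i : ℕ) : ℝ) * h0) ^ β') :
    ∀ d i j : ℕ, a ≤ i → i ≤ j → j ≤ b → j - i = d →
      |∑ k ∈ Finset.Ico i j, F k * (X (k + 1) - X k) - F i * (X j - X i)|
        ≤ (LF * LX / (1 - (2/3 : ℝ) ^ (β + β' - 1))) * (((j - i : ℕ) : ℝ) * h0) ^ (β + β') := by
  have hq1 : (2/3 : ℝ) ^ (β + β' - 1) < 1 :=
    Real.rpow_lt_one (by norm_num) (by norm_num) (by linarith)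
  have hq0 : (0:ℝ) < (2/3 : ℝ) ^ (β + β' - 1) := Real.rpow_pos_of_pos (by norm_num) _
  set q : ℝ := (2/3 : ℝ) ^ (β + β' - 1) with hq
  set C : ℝ := LF * LX / (1 - q) with hC
  have hC0 : 0 ≤ C := div_nonneg (mul_nonneg hLF hLX) (by linarith)
  intro d
  induction d using Nat.strong_induction_on with
  | _ d ih =>
    intro i j hai hij hjb hd
    rcases Nat.lt_or_ge d 2 with hd2 | hd2
    · -- d = 0 or 1 : error is zero
      interval_cases d
      · have : i = j := by omega
        subst this
        simp [Real.rpow_natCast]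
        positivity
      · have : j = i + 1 := by omega
        subst this
        rw [Finset.sum_Ico_eq_sum_range]
        simp only [Nat.add_sub_cancel_left]
        simp
        positivity
    · -- d ≥ 2 : split at midpoint
      set mid := i + d / 2 with hmid
      have him : i ≤ mid := by omega
      have hmj : mid ≤ j := by omega
      have hd1 : mid - i = d / 2 := by omega
      have hd2' : j - mid = d - d / 2 := by omega
      have hlt1 : mid - i < d := by omega
      have hlt2 : j - mid < d := by omega
      have E1 := ih _ hlt1 i mid hai him (le_trans hmj hjb) rfl
      have E2 := ih _ hlt2 mid j (le_trans hai him) hmj hjb rfl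
      -- lengths
      have h1 : ((mid - i : ℕ) : ℝ) * h0 ≤ (2/3) * (((j - i : ℕ) : ℝ) * h0) := by
        have : 3 * (mid - i) ≤ 2 * (j - i) := by omega
        have h' : ((mid - i : ℕ) : ℝ) ≤ (2/3) * ((j - i : ℕ) : ℝ) := by
          rw [div_mul_eq_mul_div, le_div_iff₀ (by norm_num)]
          have h'' := (Nat.cast_le (α := ℝ)).2 this
          push_cast at h'' ⊢
          linarith
        nlinarith [hh0.le, h']
      have h2 : ((j - mid : ℕ) : ℝ) * h0 ≤ (2/3) * (((j - i : ℕ) : ℝ) * h0) := by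
        have : 3 * (j - mid) ≤ 2 * (j - i) := by omega
        have h' : ((j - mid : ℕ) : ℝ) ≤ (2/3) * ((j - i : ℕ) : ℝ) := by
          rw [div_mul_eq_mul_div, le_div_iff₀ (by norm_num)]
          have h'' := (Nat.cast_le (α := ℝ)).2 this
          push_cast at h'' ⊢
          linarith
        nlinarith [hh0.le, h']
      set H : ℝ := ((j - i : ℕ) : ℝ) * h0 with hH
      have hH0 : 0 < H := by
        apply mul_pos _ hh0
        have : 0 < j - i := by omega
        exact_mod_cast this
      have hH1 : (0:ℝ) ≤ ((mid - i : ℕ) : ℝ) * h0 := by positivity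
      have hH2 : (0:ℝ) ≤ ((j - mid : ℕ) : ℝ) * h0 := by positivity
      -- splitting identity
      have hsplit : ∑ k ∈ Finset.Ico i j, F k * (X (k + 1) - X k) - F i * (X j - X i)
          = (∑ k ∈ Finset.Ico i mid, F k * (X (k + 1) - X k) - F i * (X mid - X i))
            + (∑ k ∈ Finset.Ico mid j, F k * (X (k + 1) - X k) - F mid * (X j - X mid))
            + (F mid - F i) * (X j - X mid) := by
        rw [← Finset.sum_Ico_consecutive _ him hmj]; ring
      have hcross : |(F mid - F i) * (X j - X mid)|
          ≤ LF * LX * ((((mid - i : ℕ) : ℝ) * h0) ^ β * (((j - mid : ℕ) : ℝ) * h0) ^ β') := by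
        rw [abs_mul]
        calc |F mid - F i| * |X j - X mid|
            ≤ (LF * ((((mid - i : ℕ) : ℝ)) * h0) ^ β) * (LX * ((((j - mid : ℕ) : ℝ)) * h0) ^ β') := by
              apply mul_le_mul (hF i mid hai him (le_trans hmj hjb))
                (hX mid j (le_trans hai him) hmj hjb) (abs_nonneg _) (by positivity)
          _ = LF * LX * ((((mid - i : ℕ) : ℝ) * h0) ^ β * (((j - mid : ℕ) : ℝ) * h0) ^ β') := by ring
      -- power bounds
      have key1 : (((mid - i : ℕ) : ℝ) * h0) ^ (β + β') + (((j - mid : ℕ) : ℝ) * h0) ^ (β + β')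
          ≤ q * H ^ (β + β') := by
        have e1 : (((mid - i : ℕ) : ℝ) * h0) ^ (β + β')
            ≤ (((mid - i : ℕ) : ℝ) * h0) * ((2/3) * H) ^ (β + β' - 1) := by
          calc (((mid - i : ℕ) : ℝ) * h0) ^ (β + β')
              = (((mid - i : ℕ) : ℝ) * h0) ^ (1 : ℝ) * (((mid - i : ℕ) : ℝ) * h0) ^ (β + β' - 1) := by
                rw [← Real.rpow_add' hH1 (by ring_nf; linarith)]
                norm_num
            _ ≤ (((mid - i : ℕ) : ℝ) * h0) * ((2/3) * H) ^ (β + β' - 1) := by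
                rw [Real.rpow_one]
                exact mul_le_mul_of_nonneg_left
                  (Real.rpow_le_rpow hH1 h1 (by linarith)) hH1
        have e2 : (((j - mid : ℕ) : ℝ) * h0) ^ (β + β')
            ≤ (((j - mid : ℕ) : ℝ) * h0) * ((2/3) * H) ^ (β + β' - 1) := by
          calc (((j - mid : ℕ) : ℝ) * h0) ^ (β + β')
              = (((j - mid : ℕ) : ℝ) * h0) ^ (1 : ℝ) * (((j - mid : ℕ) : ℝ) * h0) ^ (β + β' - 1) := by
                rw [← Real.rpow_add' hH2 (by ring_nf; linarith)]
                norm_num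
            _ ≤ (((j - mid : ℕ) : ℝ) * h0) * ((2/3) * H) ^ (β + β' - 1) := by
                rw [Real.rpow_one]
                exact mul_le_mul_of_nonneg_left
                  (Real.rpow_le_rpow hH2 h2 (by linarith)) hH2
        have hsum : ((mid - i : ℕ) : ℝ) * h0 + ((j - mid : ℕ) : ℝ) * h0 = H := by
          rw [hH, ← add_mul]
          congr 1
          push_cast [Nat.cast_sub (le_trans hai him), Nat.cast_sub him, Nat.cast_sub hmj,
            Nat.cast_sub (le_trans him hmj)]
          push_cast [Nat.cast_sub hij]
          ring
        have e3 : ((2/3 : ℝ) * H) ^ (β + β' - 1) = q * H ^ (β + β' - 1) := by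
          rw [Real.mul_rpow (by norm_num) hH0.le]
        have e4 : H * H ^ (β + β' - 1) = H ^ (β + β') := by
          rw [← Real.rpow_one_add' hH0.le (by ring_nf; linarith)]
          norm_num
        calc (((mid - i : ℕ) : ℝ) * h0) ^ (β + β') + (((j - mid : ℕ) : ℝ) * h0) ^ (β + β')
            ≤ (((mid - i : ℕ) : ℝ) * h0 + ((j - mid : ℕ) : ℝ) * h0) * ((2/3) * H) ^ (β + β' - 1) := by
              rw [add_mul]; exact add_le_add e1 e2
          _ = H * (q * H ^ (β + β' - 1)) := by rw [hsum, e3]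
          _ = q * H ^ (β + β') := by rw [← e4]; ring
      have key2 : (((mid - i : ℕ) : ℝ) * h0) ^ β * (((j - mid : ℕ) : ℝ) * h0) ^ β'
          ≤ H ^ (β + β') := by
        have b1 : (((mid - i : ℕ) : ℝ) * h0) ^ β ≤ H ^ β := by
          apply Real.rpow_le_rpow hH1 _ hβ0.le
          calc ((mid - i : ℕ) : ℝ) * h0 ≤ (2/3) * H := h1
            _ ≤ H := by linarith
        have b2 : (((j - mid : ℕ) : ℝ) * h0) ^ β' ≤ H ^ β' := by
          apply Real.rpow_le_rpow hH2 _ hβ'0.le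
          calc ((j - mid : ℕ) : ℝ) * h0 ≤ (2/3) * H := h2
            _ ≤ H := by linarith
        calc (((mid - i : ℕ) : ℝ) * h0) ^ β * (((j - mid : ℕ) : ℝ) * h0) ^ β'
            ≤ H ^ β * H ^ β' := mul_le_mul b1 b2 (Real.rpow_nonneg hH2 _) (Real.rpow_nonneg hH0.le _)
          _ = H ^ (β + β') := (Real.rpow_add hH0 _ _).symm
      -- assemble
      have hCq : C * q + LF * LX = C := by
        have h1q : (1:ℝ) - q ≠ 0 := by linarith
        have hCe : C * (1 - q) = LF * LX := by rw [hC, div_mul_cancel₀ _ h1q]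
        linear_combination -hCe
      rw [hsplit]
      set A1 : ℝ := ∑ k ∈ Finset.Ico i mid, F k * (X (k + 1) - X k) - F i * (X mid - X i) with hA1
      set A2 : ℝ := ∑ k ∈ Finset.Ico mid j, F k * (X (k + 1) - X k) - F mid * (X j - X mid) with hA2
      set A3 : ℝ := (F mid - F i) * (X j - X mid) with hA3
      calc |A1 + A2 + A3| ≤ |A1| + |A2| + |A3| := abs_add_three A1 A2 A3
        _ ≤ C * (((mid - i : ℕ) : ℝ) * h0) ^ (β + β') + C * (((j - mid : ℕ) : ℝ) * h0) ^ (β + β')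
              + LF * LX * ((((mid - i : ℕ) : ℝ) * h0) ^ β * (((j - mid : ℕ) : ℝ) * h0) ^ β') :=
            add_le_add (add_le_add E1 E2) hcross
        _ = C * ((((mid - i : ℕ) : ℝ) * h0) ^ (β + β') + (((j - mid : ℕ) : ℝ) * h0) ^ (β + β'))
              + LF * LX * ((((mid - i : ℕ) : ℝ) * h0) ^ β * (((j - mid : ℕ) : ℝ) * h0) ^ β') := by
            ring
        _ ≤ C * (q * H ^ (β + β')) + LF * LX * H ^ (β + β') :=
            add_le_add (mul_le_mul_of_nonneg_left key1 hC0)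
              (mul_le_mul_of_nonneg_left key2 (mul_nonneg hLF hLX))
        _ = (C * q + LF * LX) * H ^ (β + β') := by ring
        _ = C * H ^ (β + β') := by rw [hCq]

lemma RS_step (β' : ℝ) (hβ'0 : 0 < β') (T : ℝ) (n : ℕ) (hT : 0 < T) (hn : 0 < n)
    (φ : ℝ → ℝ) (MV : ℝ) (hMV : ∀ u, |φ u| ≤ MV)
    (x : ℝ → ℝ) (Cx : ℝ) (hCx : 0 ≤ Cx)
    (hx : ∀ u ∈ Set.Icc (0:ℝ) T, ∀ v ∈ Set.Icc (0:ℝ) T, |x v - x u| ≤ Cx * |v - u| ^ β')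
    (a b : ℕ) (hab : a < b) (hbn : b ≤ n) :
    RS (fun u => φ (etaFn T n u)) x ((a:ℝ)*T/n) ((b:ℝ)*T/n)
      = ∑ j ∈ Finset.Ico a b, φ ((j:ℝ)*T/n) * (x (((j:ℝ)+1)*T/n) - x ((j:ℝ)*T/n)) := by
  have hn' : (0:ℝ) < n := by exact_mod_cast hn
  have hMV0 : 0 ≤ MV := (abs_nonneg _).trans (hMV 0)
  set p : ℕ → ℝ := fun j => (j:ℝ) * T / n with hp
  set idx : ℝ → ℕ := fun u => ⌊u * n / T⌋₊ with hidx
  have heta : ∀ u, etaFn T n u = p (idx u) := fun u => rfl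
  have hp_mono : ∀ i j : ℕ, i ≤ j → p i ≤ p j := by
    intro i j hij
    have h : (i:ℝ) ≤ j := Nat.cast_le.2 hij
    simp only [hp]
    gcongr
  have hp_nonneg : ∀ j : ℕ, 0 ≤ p j := by
    intro j; simp only [hp]; positivity
  have hidx_p : ∀ j : ℕ, idx (p j) = j := by
    intro j
    simp only [hidx, hp]
    have : (j:ℝ) * T / n * n / T = (j:ℝ) := by field_simp
    rw [this, Nat.floor_natCast]
  have hidx_mono : ∀ u v : ℝ, u ≤ v → idx u ≤ idx v := by
    intro u v huv
    apply Nat.floor_mono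
    have : (0:ℝ) ≤ n / T := by positivity
    calc u * n / T = u * (n / T) := by ring
      _ ≤ v * (n / T) := mul_le_mul_of_nonneg_right huv this
      _ = v * n / T := by ring
  have hp_idx_le : ∀ u : ℝ, 0 ≤ u → p (idx u) ≤ u := by
    intro u hu
    have h1 : (⌊u * n / T⌋₊ : ℝ) ≤ u * n / T := Nat.floor_le (by positivity)
    simp only [hp, hidx]
    calc (⌊u * n / T⌋₊ : ℝ) * T / n ≤ (u * n / T) * T / n := by gcongr
      _ = u := by field_simp
  have hlt_p_idx : ∀ u : ℝ, u < p (idx u + 1) := by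
    intro u
    have h1 : u * n / T < (⌊u * n / T⌋₊ : ℝ) + 1 := Nat.lt_floor_add_one _
    simp only [hp, hidx]
    push_cast
    calc u = (u * n / T) * T / n := by field_simp
      _ < ((⌊u * n / T⌋₊ : ℝ) + 1) * T / n := by gcongr
  have hidx_lt : ∀ (u : ℝ) (M : ℕ), 0 ≤ u → u < p M → idx u < M := by
    intro u M hu hlt
    simp only [hidx]
    rw [Nat.floor_lt (by positivity)]
    simp only [hp] at hlt
    calc u * n / T < ((M:ℝ) * T / n) * n / T := by gcongr
      _ = M := by field_simp
  set s : ℝ := (a:ℝ) * T / n with hs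
  set t : ℝ := (b:ℝ) * T / n with ht
  have hps : p a = s := rfl
  have hpt : p b = t := rfl
  have hst : s < t := by
    simp only [hs, ht]
    have h : (a:ℝ) < b := Nat.cast_lt.2 hab
    gcongr
  have hts0 : (0:ℝ) ≤ t - s := by linarith
  have hs0 : 0 ≤ s := hp_nonneg a
  have htT : t ≤ T := by
    simp only [ht]
    have h : (b:ℝ) ≤ n := Nat.cast_le.2 hbn
    calc (b:ℝ) * T / n ≤ (n:ℝ) * T / n := by gcongr
      _ = T := by field_simp
  have hp_succ : ∀ j : ℕ, p (j + 1) = p j + T / n := by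
    intro j; simp only [hp]; push_cast; ring
  have hpn1 : T < p (n + 1) := by
    simp only [hp]
    push_cast
    rw [lt_div_iff₀ hn']
    nlinarith
  set S : ℝ := ∑ j ∈ Finset.Ico a b, φ (p j) * (x (p (j+1)) - x (p j)) with hS
  set A : ℝ → ℝ := fun v => ∑ j ∈ Finset.range (idx v), φ (p j) * (x (p (j+1)) - x (p j)) with hA
  set e : ℝ → ℝ := fun v => x v - x (p (idx v)) with he
  set R : ℕ → ℝ := fun N => ∑ k ∈ Finset.range N,
      φ (etaFn T n (s + (k:ℝ) * (t - s) / N)) *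
        (x (s + ((k:ℝ) + 1) * (t - s) / N) - x (s + (k:ℝ) * (t - s) / N)) with hR
  -- the main estimate for N > b - a
  have hbound : ∀ N : ℕ, b - a < N →
      |R N - S| ≤ ((n:ℝ) + 1) * (2 * MV * Cx * ((t - s) / N) ^ β') := by
    intro N hN
    have hN0 : 0 < N := by omega
    have hN' : (0:ℝ) < N := by exact_mod_cast hN0
    set U : ℕ → ℝ := fun k => s + (k:ℝ) * (t - s) / N with hU
    set mesh : ℝ := (t - s) / N with hmesh
    have hmesh0 : 0 < mesh := by
      apply div_pos _ hN'; linarith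
    have hU_succ : ∀ k : ℕ, U (k+1) = U k + mesh := by
      intro k; simp only [hU, hmesh]; push_cast; ring
    have hU_mono : ∀ k l : ℕ, k ≤ l → U k ≤ U l := by
      intro k l hkl
      have h : (k:ℝ) ≤ l := Nat.cast_le.2 hkl
      simp only [hU]
      gcongr
    have hU0 : U 0 = s := by simp [hU]
    have hUN : U N = t := by
      simp only [hU]; field_simp; ring
    have hU_nonneg : ∀ k : ℕ, 0 ≤ U k := by
      intro k
      have : s ≤ U k := by rw [← hU0]; exact hU_mono 0 k (Nat.zero_le _)
      linarith
    have hU_leT : ∀ k : ℕ, k ≤ N → U k ≤ T := by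
      intro k hk
      have : U k ≤ U N := hU_mono k N hk
      rw [hUN] at this; linarith
    have htseq : t - s = ((b - a : ℕ) : ℝ) * (T / n) := by
      rw [Nat.cast_sub hab.le]
      simp only [ht, hs]
      field_simp
    have hmesh_lt : mesh < T / n := by
      rw [hmesh, htseq, div_lt_iff₀ hN']
      have hba : ((b - a : ℕ) : ℝ) < N := by exact_mod_cast hN
      have hTn : (0:ℝ) < T / n := by positivity
      nlinarith
    -- idx increases by at most one along the fine partition
    have hidx_step : ∀ k : ℕ, idx (U (k+1)) ≤ idx (U k) + 1 := by
      intro k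
      have h1 : U (k+1) < p (idx (U k) + 1 + 1) := by
        rw [hU_succ k, hp_succ (idx (U k) + 1)]
        exact add_lt_add (hlt_p_idx (U k)) hmesh_lt
      have := hidx_lt (U (k+1)) (idx (U k) + 1 + 1) (hU_nonneg _) h1
      omega
    have hidx_le : ∀ k : ℕ, idx (U k) ≤ idx (U (k+1)) := fun k =>
      hidx_mono _ _ (by rw [hU_succ]; linarith)
    -- telescoping identity
    have hA_step : ∀ k : ℕ,
        φ (p (idx (U k))) * (x (p (idx (U (k+1)))) - x (p (idx (U k)))) = A (U (k+1)) - A (U k) := by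
      intro k
      have h1 := hidx_step k
      have h2 := hidx_le k
      have : idx (U (k+1)) = idx (U k) ∨ idx (U (k+1)) = idx (U k) + 1 := by omega
      rcases this with h | h
      · simp only [hA, h, sub_self, mul_zero]
      · simp only [hA, h, Finset.sum_range_succ]
        ring
    have hterm : ∀ k : ℕ,
        φ (etaFn T n (U k)) * (x (U (k+1)) - x (U k))
          = (A (U (k+1)) - A (U k)) + φ (p (idx (U k))) * (e (U (k+1)) - e (U k)) := by
      intro k
      rw [heta, ← hA_step k]
      simp only [he]
      ring
    -- rewrite R N
    have hRN : R N = (A (U N) - A (U 0))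
        + ∑ k ∈ Finset.range N, φ (p (idx (U k))) * (e (U (k+1)) - e (U k)) := by
      simp only [hR]
      have hcg : ∀ k ∈ Finset.range N,
          φ (etaFn T n (s + (k:ℝ) * (t - s) / N)) *
            (x (s + ((k:ℝ) + 1) * (t - s) / N) - x (s + (k:ℝ) * (t - s) / N))
          = (A (U (k+1)) - A (U k)) + φ (p (idx (U k))) * (e (U (k+1)) - e (U k)) := by
        intro k _
        have e2 : s + ((k:ℝ) + 1) * (t - s) / N = U (k+1) := by
          simp only [hU]; push_cast; ring
        have e1 : s + (k:ℝ) * (t - s) / N = U k := rfl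
        rw [e1, e2, hterm k]
      rw [Finset.sum_congr rfl hcg, Finset.sum_add_distrib,
        Finset.sum_range_sub (fun k => A (U k))]
    have hAS : A (U N) - A (U 0) = S := by
      rw [hUN, hU0]
      simp only [hA, hS]
      have h1 : idx t = b := by rw [← hpt, hidx_p]
      have h2 : idx s = a := by rw [← hps, hidx_p]
      rw [h1, h2, Finset.sum_Ico_eq_sub _ hab.le]
    -- Abel summation for the error term
    obtain ⟨M, rfl⟩ : ∃ M, N = M + 1 := ⟨N - 1, by omega⟩
    set g : ℕ → ℝ := fun k => φ (p (idx (U k))) with hg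
    have he0 : e (U 0) = 0 := by
      rw [hU0]; simp only [he]
      rw [← hps, hidx_p, hps, sub_self]
    have heN : e (U (M+1)) = 0 := by
      rw [hUN]; simp only [he]
      rw [← hpt, hidx_p, hpt, sub_self]
    have hD : ∑ k ∈ Finset.range (M+1), g k * (e (U (k+1)) - e (U k))
        = ∑ k ∈ Finset.range M, (g k - g (k+1)) * e (U (k+1)) := by
      have h1 : ∑ k ∈ Finset.range (M+1), g k * (e (U (k+1)) - e (U k))
          = ∑ k ∈ Finset.range (M+1), g k * e (U (k+1))
            - ∑ k ∈ Finset.range (M+1), g k * e (U k) := by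
        rw [← Finset.sum_sub_distrib]
        exact Finset.sum_congr rfl (fun k _ => by ring)
      rw [h1, Finset.sum_range_succ (fun k => g k * e (U (k+1))) M,
        Finset.sum_range_succ' (fun k => g k * e (U k)) M, he0, heN]
      simp only [mul_zero, add_zero, zero_add]
      rw [← Finset.sum_sub_distrib]
      exact Finset.sum_congr rfl (fun k _ => by ring)
    have hRS : R (M+1) - S = ∑ k ∈ Finset.range M, (g k - g (k+1)) * e (U (k+1)) := by
      rw [hRN, hAS, hD]; ring
    rw [hRS]
    set B : ℝ := 2 * MV * Cx * mesh ^ β' with hB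
    have hB0 : 0 ≤ B := by
      rw [hB]; positivity
    have hterm_bound : ∀ k ∈ Finset.range M,
        |(g k - g (k+1)) * e (U (k+1))| ≤ if idx (U k) = idx (U (k+1)) then 0 else B := by
      intro k hk
      rw [Finset.mem_range] at hk
      by_cases hcase : idx (U k) = idx (U (k+1))
      · rw [if_pos hcase]
        have : g k = g (k+1) := by simp only [hg, hcase]
        rw [this, sub_self, zero_mul, abs_zero]
      · rw [if_neg hcase]
        have hklt : idx (U k) < idx (U (k+1)) := lt_of_le_of_ne (hidx_le k) hcase
        have hUk1T : U (k+1) ≤ T := hU_leT _ (by omega)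
        have hple : p (idx (U (k+1))) ≤ U (k+1) := hp_idx_le _ (hU_nonneg _)
        have hpgt : U k < p (idx (U (k+1))) :=
          lt_of_lt_of_le (hlt_p_idx (U k)) (hp_mono _ _ hklt)
        have hediff : |e (U (k+1))| ≤ Cx * mesh ^ β' := by
          simp only [he]
          have hmem1 : p (idx (U (k+1))) ∈ Set.Icc (0:ℝ) T := ⟨hp_nonneg _, le_trans hple hUk1T⟩
          have hmem2 : U (k+1) ∈ Set.Icc (0:ℝ) T := ⟨hU_nonneg _, hUk1T⟩
          refine le_trans (hx _ hmem1 _ hmem2) ?_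
          have habs : |U (k+1) - p (idx (U (k+1)))| ≤ mesh := by
            rw [abs_of_nonneg (by linarith)]
            have := hU_succ k
            linarith
          exact mul_le_mul_of_nonneg_left
            (Real.rpow_le_rpow (abs_nonneg _) habs hβ'0.le) hCx
        have hgb : |g k - g (k+1)| ≤ 2 * MV := by
          calc |g k - g (k+1)| ≤ |g k| + |g (k+1)| := abs_sub _ _
            _ ≤ MV + MV := add_le_add (hMV _) (hMV _)
            _ = 2 * MV := by ring
        calc |(g k - g (k+1)) * e (U (k+1))|
            = |g k - g (k+1)| * |e (U (k+1))| := abs_mul _ _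
          _ ≤ (2 * MV) * (Cx * mesh ^ β') :=
              mul_le_mul hgb hediff (abs_nonneg _) (by positivity)
          _ = B := by rw [hB]; ring
    set J : Finset ℕ := (Finset.range M).filter (fun k => ¬ idx (U k) = idx (U (k+1))) with hJ
    have hinto : ∀ k ∈ J, idx (U (k+1)) ∈ Finset.range (n+1) := by
      intro k hk
      rw [Finset.mem_range]
      have hkM : k < M := Finset.mem_range.1 (Finset.mem_filter.1 hk).1
      have h1 : U (k+1) ≤ T := hU_leT _ (by omega)
      exact hidx_lt (U (k+1)) (n+1) (hU_nonneg _) (lt_of_le_of_lt h1 hpn1)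
    have hinj : Set.InjOn (fun k => idx (U (k+1))) J := by
      intro k hk l hl hkl
      have hkl' : idx (U (k+1)) = idx (U (l+1)) := hkl
      by_contra hne
      rcases lt_or_gt_of_ne hne with h | h
      · have hlJ : ¬ idx (U l) = idx (U (l+1)) := by
          have := (Finset.mem_filter.1 hl).2
          simpa using this
        have h1 : idx (U (k+1)) ≤ idx (U l) := hidx_mono _ _ (hU_mono _ _ (by omega))
        have h2 : idx (U l) < idx (U (l+1)) := lt_of_le_of_ne (hidx_le l) hlJ
        omega
      · have hkJ : ¬ idx (U k) = idx (U (k+1)) := by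
          have := (Finset.mem_filter.1 hk).2
          simpa using this
        have h1 : idx (U (l+1)) ≤ idx (U k) := hidx_mono _ _ (hU_mono _ _ (by omega))
        have h2 : idx (U k) < idx (U (k+1)) := lt_of_le_of_ne (hidx_le k) hkJ
        omega
    have hcardJ : J.card ≤ n + 1 := by
      have := Finset.card_le_card_of_injOn (fun k => idx (U (k+1))) hinto hinj
      simpa using this
    calc |∑ k ∈ Finset.range M, (g k - g (k+1)) * e (U (k+1))|
        ≤ ∑ k ∈ Finset.range M, |(g k - g (k+1)) * e (U (k+1))| :=
          Finset.abs_sum_le_sum_abs _ _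
      _ ≤ ∑ k ∈ Finset.range M, (if idx (U k) = idx (U (k+1)) then 0 else B) :=
          Finset.sum_le_sum hterm_bound
      _ = ∑ _k ∈ J, B := by
          rw [hJ, Finset.sum_filter]
          exact Finset.sum_congr rfl (fun k _ => by
            by_cases h : idx (U k) = idx (U (k+1)) <;> simp [h])
      _ = (J.card : ℝ) * B := by rw [Finset.sum_const, nsmul_eq_mul]
      _ ≤ ((n:ℝ) + 1) * B := by
          have : (J.card : ℝ) ≤ (n:ℝ) + 1 := by exact_mod_cast hcardJ
          exact mul_le_mul_of_nonneg_right this hB0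
  -- pass to the limit
  have hRtend : Tendsto R atTop (𝓝 S) := by
    have hev : ∀ᶠ N : ℕ in atTop, ‖R N - S‖ ≤ ((n:ℝ)+1) * (2*MV*Cx*((t-s)/N) ^ β') := by
      filter_upwards [eventually_ge_atTop (b - a + 1)] with N hN
      rw [Real.norm_eq_abs]
      exact hbound N (by omega)
    have h2 : Tendsto (fun N : ℕ => (t-s)/N) atTop (𝓝 0) :=
      tendsto_const_div_atTop_nhds_zero_nat (t-s)
    have h3 : Tendsto (fun N : ℕ => ((t-s)/N) ^ β') atTop (𝓝 0) := by
      have hc : ContinuousAt (fun z : ℝ => z ^ β') 0 :=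
        Real.continuousAt_rpow_const 0 β' (Or.inr hβ'0.le)
      have := hc.tendsto.comp h2
      simpa [Real.zero_rpow (ne_of_gt hβ'0), Function.comp_def] using this
    have h4 : Tendsto (fun N : ℕ => ((n:ℝ)+1) * (2*MV*Cx*((t-s)/N) ^ β')) atTop (𝓝 0) := by
      have := (h3.const_mul (((n:ℝ)+1) * (2*MV*Cx)))
      simpa [mul_assoc] using this
    have h1 : Tendsto (fun N : ℕ => R N - S) atTop (𝓝 0) := squeeze_zero_norm' hev h4
    have := h1.add (tendsto_const_nhds (x := S))
    simpa using this
  have hlim : RS (fun u => φ (etaFn T n u)) x s t = S := by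
    have : RS (fun u => φ (etaFn T n u)) x s t = limUnder atTop R := rfl
    rw [this]
    exact hRtend.limUnder_eq
  rw [hlim, hS]
  apply Finset.sum_congr rfl
  intro j hj
  have h1 : p j = (j:ℝ)*T/n := rfl
  have h2 : p (j+1) = ((j:ℝ)+1)*T/n := by simp only [hp]; push_cast; ring
  rw [h1, h2]

/-- Lemma A.3: for `β + β' > 1`, a `β'`-Hölder driver `x`, `V ∈ C¹_b`, and a path `y`
with finite discrete `β`-Hölder seminorm over the uniform partition `D = {kT/n}`, one has,
for `s < t` in `D`,
`|∫_s^t V(y_{η(r)}) dx_r| ≤ K [1 + ‖y‖_{s,t,β,n}(t−s)^β] ‖x‖_{β'} (t−s)^{β'}`,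
with `K` depending only on `β, β', ‖V‖_∞, ‖∂V‖_∞`. -/
theorem step_function_young_integral_estimate
    (β β' : ℝ) (hβ0 : 0 < β) (hβ1 : β < 1) (hβ'0 : 0 < β') (hβ'1 : β' < 1)
    (hββ' : 1 < β + β')
    (m : ℕ) (V : (Fin m → ℝ) → ℝ) (MV M'V : ℝ)
    (hV : ContDiff ℝ 1 V) (hVb : ∀ z, |V z| ≤ MV)
    (hV' : ∀ z, ‖fderiv ℝ V z‖ ≤ M'V) :
    ∃ K : ℝ, 0 < K ∧
      ∀ (T : ℝ) (n : ℕ) (x : ℝ → ℝ) (Cx : ℝ) (y : ℝ → Fin m → ℝ) (Cy : ℝ) (s t : ℝ),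
      0 < T → 0 < n →
      (∀ u ∈ Set.Icc (0 : ℝ) T, ∀ v ∈ Set.Icc (0 : ℝ) T, |x v - x u| ≤ Cx * |v - u| ^ β') →
      -- discrete Hölder seminorm bound for `y` on `D ∩ [s,t]`
      (∀ k k' : ℕ, k ≤ n → k' ≤ n →
        s ≤ (k : ℝ) * T / n → (k : ℝ) * T / n ≤ t →
        s ≤ (k' : ℝ) * T / n → (k' : ℝ) * T / n ≤ t →
        ‖y ((k : ℝ) * T / n) - y ((k' : ℝ) * T / n)‖
          ≤ Cy * |(k : ℝ) * T / n - (k' : ℝ) * T / n| ^ β) →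
      (∃ k : ℕ, k ≤ n ∧ s = (k : ℝ) * T / n) →
      (∃ k : ℕ, k ≤ n ∧ t = (k : ℝ) * T / n) →
      s < t →
      |RS (fun u => V (y (etaFn T n u))) x s t|
        ≤ K * (1 + Cy * (t - s) ^ β) * Cx * (t - s) ^ β' := by
  have hq1 : (2/3 : ℝ) ^ (β + β' - 1) < 1 :=
    Real.rpow_lt_one (by norm_num) (by norm_num) (by linarith)
  have hq0 : (0:ℝ) < (2/3 : ℝ) ^ (β + β' - 1) := Real.rpow_pos_of_pos (by norm_num) _
  set q : ℝ := (2/3 : ℝ) ^ (β + β' - 1) with hq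
  have h1q : (0:ℝ) < 1 - q := by linarith
  have hMV0 : 0 ≤ MV := (abs_nonneg _).trans (hVb 0)
  have hM'V0 : 0 ≤ M'V := (norm_nonneg _).trans (hV' 0)
  have hVlip : ∀ z w, |V z - V w| ≤ M'V * ‖z - w‖ := by
    intro z w
    have := Convex.norm_image_sub_le_of_norm_fderiv_le (f := V) (C := M'V) (s := Set.univ)
      (fun u _ => (hV.differentiable one_ne_zero).differentiableAt)
      (fun u _ => hV' u) convex_univ (Set.mem_univ w) (Set.mem_univ z)
    simpa [Real.norm_eq_abs] using this
  refine ⟨MV + M'V / (1 - q) + 1, by positivity, ?_⟩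
  intro T n x Cx y Cy s t hT hn hx hy hsD htD hst
  obtain ⟨ka, hka, rfl⟩ := hsD
  obtain ⟨kb, hkb, rfl⟩ := htD
  have hn' : (0:ℝ) < n := by exact_mod_cast hn
  have hab : ka < kb := by
    by_contra h
    push_neg at h
    have : (kb:ℝ) ≤ ka := Nat.cast_le.2 h
    have : (kb:ℝ) * T / n ≤ (ka:ℝ) * T / n := by gcongr
    linarith
  set s : ℝ := (ka:ℝ) * T / n with hs
  set t : ℝ := (kb:ℝ) * T / n with ht
  set h0 : ℝ := T / n with hh0def
  have hh0 : 0 < h0 := by rw [hh0def]; positivity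
  have hts : t - s = ((kb - ka : ℕ) : ℝ) * h0 := by
    rw [Nat.cast_sub hab.le, hs, ht, hh0def]
    field_simp
  have hts0 : 0 < t - s := by linarith
  -- nonnegativity of the Hölder constants
  have hCx : 0 ≤ Cx := by
    have h := hx 0 ⟨le_refl 0, hT.le⟩ T ⟨hT.le, le_refl T⟩
    have hTb : (0:ℝ) < |T - 0| ^ β' := by
      rw [sub_zero, abs_of_pos hT]
      exact Real.rpow_pos_of_pos hT _
    have h2 : 0 ≤ Cx * |T - 0| ^ β' := le_trans (abs_nonneg _) h
    exact nonneg_of_mul_nonneg_right (by linarith [h2] : (0:ℝ) ≤ |T - 0| ^ β' * Cx) hTb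
  have hCy : 0 ≤ Cy := by
    have h := hy kb ka hkb hka (le_of_lt hst) (le_refl t) (le_refl s) hst.le
    have h2 : 0 ≤ Cy * |t - s| ^ β := le_trans (norm_nonneg _) h
    have hTb : (0:ℝ) < |t - s| ^ β := by
      rw [abs_of_pos hts0]
      exact Real.rpow_pos_of_pos hts0 _
    exact nonneg_of_mul_nonneg_right (by linarith [h2] : (0:ℝ) ≤ |t - s| ^ β * Cy) hTb
  set p : ℕ → ℝ := fun j => (j:ℝ) * T / n with hp
  have hp_mono : ∀ i j : ℕ, i ≤ j → p i ≤ p j := by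
    intro i j hij
    have h : (i:ℝ) ≤ j := Nat.cast_le.2 hij
    simp only [hp]
    gcongr
  have hp_mem : ∀ j : ℕ, j ≤ n → p j ∈ Set.Icc (0:ℝ) T := by
    intro j hj
    constructor
    · simp only [hp]; positivity
    · simp only [hp]
      have h : (j:ℝ) ≤ n := Nat.cast_le.2 hj
      calc (j:ℝ) * T / n ≤ (n:ℝ) * T / n := by gcongr
        _ = T := by field_simp
  have hp_diff : ∀ i j : ℕ, i ≤ j → p j - p i = ((j - i : ℕ) : ℝ) * h0 := by
    intro i j hij
    rw [Nat.cast_sub hij]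
    simp only [hp, hh0def]
    field_simp
  set F : ℕ → ℝ := fun j => V (y (p j)) with hF
  set X : ℕ → ℝ := fun j => x (p j) with hX
  -- Hölder bounds along the coarse grid between ka and kb
  have hFb : ∀ i j : ℕ, ka ≤ i → i ≤ j → j ≤ kb →
      |F j - F i| ≤ (M'V * Cy) * (((j - i : ℕ) : ℝ) * h0) ^ β := by
    intro i j hai hij hjb
    have hjn : j ≤ n := le_trans hjb hkb
    have hin : i ≤ n := le_trans hij hjn
    have h1 : s ≤ (i:ℝ)*T/n := hp_mono ka i hai
    have h2 : (i:ℝ)*T/n ≤ t := hp_mono i kb (le_trans hij hjb)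
    have h3 : s ≤ (j:ℝ)*T/n := hp_mono ka j (le_trans hai hij)
    have h4 : (j:ℝ)*T/n ≤ t := hp_mono j kb hjb
    have hyb := hy j i hjn hin h3 h4 h1 h2
    have habs : |(j:ℝ)*T/n - (i:ℝ)*T/n| = ((j - i : ℕ):ℝ) * h0 := by
      rw [abs_of_nonneg (by linarith [hp_mono i j hij] : (0:ℝ) ≤ (j:ℝ)*T/n - (i:ℝ)*T/n)]
      exact hp_diff i j hij
    rw [habs] at hyb
    calc |F j - F i| ≤ M'V * ‖y (p j) - y (p i)‖ := hVlip _ _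
      _ ≤ M'V * (Cy * (((j - i : ℕ):ℝ) * h0) ^ β) :=
          mul_le_mul_of_nonneg_left hyb hM'V0
      _ = (M'V * Cy) * (((j - i : ℕ):ℝ) * h0) ^ β := by ring
  have hXb : ∀ i j : ℕ, ka ≤ i → i ≤ j → j ≤ kb →
      |X j - X i| ≤ Cx * (((j - i : ℕ) : ℝ) * h0) ^ β' := by
    intro i j hai hij hjb
    have hjn : j ≤ n := le_trans hjb hkb
    have hin : i ≤ n := le_trans hij hjn
    have hxb := hx (p i) (hp_mem i hin) (p j) (hp_mem j hjn)
    have habs : |p j - p i| = ((j - i : ℕ):ℝ) * h0 := by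
      rw [abs_of_nonneg (by linarith [hp_mono i j hij] : (0:ℝ) ≤ p j - p i)]
      exact hp_diff i j hij
    rw [habs] at hxb
    exact hxb
  -- the discrete Young estimate
  have hY := young_discrete β β' hβ0 hβ'0 hββ' h0 hh0 F X (M'V*Cy) Cx
      (mul_nonneg hM'V0 hCy) hCx ka kb hFb hXb (kb - ka) ka kb le_rfl hab.le le_rfl rfl
  -- identify the RS integral with the discrete sum
  have hRS' : RS (fun u => V (y (etaFn T n u))) x s t
      = ∑ j ∈ Finset.Ico ka kb, V (y ((j:ℝ)*T/n)) * (x (((j:ℝ)+1)*T/n) - x ((j:ℝ)*T/n)) :=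
    RS_step β' hβ'0 T n hT hn (fun u => V (y u)) MV (fun u => hVb (y u)) x Cx hCx hx
      ka kb hab hkb
  have hsum_eq : ∑ j ∈ Finset.Ico ka kb, V (y ((j:ℝ)*T/n)) * (x (((j:ℝ)+1)*T/n) - x ((j:ℝ)*T/n))
      = ∑ k ∈ Finset.Ico ka kb, F k * (X (k+1) - X k) := by
    apply Finset.sum_congr rfl
    intro j hj
    have hc : ((j:ℝ)+1)*T/(n:ℝ) = (((j+1:ℕ)):ℝ)*T/n := by push_cast; ring
    simp only [hF, hX, hp, hc]
  rw [hRS', hsum_eq]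
  -- final estimate
  have hFka : |F ka| ≤ MV := hVb _
  have hXdiff : |X kb - X ka| ≤ Cx * (((kb - ka : ℕ):ℝ) * h0) ^ β' := hXb ka kb le_rfl hab.le le_rfl
  have hpow : (((kb - ka : ℕ):ℝ) * h0) ^ (β + β') = (t-s)^β * (t-s)^β' := by
    rw [← hts, Real.rpow_add hts0]
  have hpow' : (((kb - ka : ℕ):ℝ) * h0) ^ β' = (t-s)^β' := by rw [← hts]
  rw [hpow] at hY
  rw [hpow'] at hXdiff
  have hsplit : ∀ Ssum : ℝ, |Ssum| ≤ |F ka * (X kb - X ka)| + |Ssum - F ka * (X kb - X ka)| := by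
    intro Ssum
    calc |Ssum| = |F ka * (X kb - X ka) + (Ssum - F ka * (X kb - X ka))| := by ring_nf
      _ ≤ |F ka * (X kb - X ka)| + |Ssum - F ka * (X kb - X ka)| := abs_add_le _ _
  have hc1 : |F ka * (X kb - X ka)| ≤ MV * (Cx * (t-s)^β') := by
    rw [abs_mul]
    exact mul_le_mul hFka hXdiff (abs_nonneg _) hMV0
  have hPb0 : 0 ≤ (t-s)^β := Real.rpow_nonneg hts0.le _
  have hP'0 : 0 ≤ (t-s)^β' := Real.rpow_nonneg hts0.le _
  have hKdef : (0:ℝ) ≤ M'V / (1 - q) := div_nonneg hM'V0 h1q.le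
  set K : ℝ := MV + M'V / (1 - q) + 1 with hK
  have hterm1 : MV * (Cx * (t-s)^β') ≤ K * (Cx * (t-s)^β') := by
    apply mul_le_mul_of_nonneg_right _ (by positivity)
    rw [hK]; linarith
  have hterm2 : (M'V * Cy * Cx / (1 - q)) * ((t-s)^β * (t-s)^β')
      ≤ K * (Cy * Cx * ((t-s)^β * (t-s)^β')) := by
    have heq : (M'V * Cy * Cx / (1 - q)) * ((t-s)^β * (t-s)^β')
        = (M'V / (1 - q)) * (Cy * Cx * ((t-s)^β * (t-s)^β')) := by ring
    rw [heq]
    apply mul_le_mul_of_nonneg_right _ (by positivity)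
    rw [hK]; linarith
  calc |∑ k ∈ Finset.Ico ka kb, F k * (X (k+1) - X k)|
      ≤ |F ka * (X kb - X ka)|
        + |∑ k ∈ Finset.Ico ka kb, F k * (X (k+1) - X k) - F ka * (X kb - X ka)| := hsplit _
    _ ≤ MV * (Cx * (t-s)^β') + (M'V * Cy * Cx / (1 - q)) * ((t-s)^β * (t-s)^β') :=
        add_le_add hc1 hY
    _ ≤ K * (Cx * (t-s)^β') + K * (Cy * Cx * ((t-s)^β * (t-s)^β')) :=
        add_le_add hterm1 hterm2
    _ = K * (1 + Cy * (t - s) ^ β) * Cx * (t - s) ^ β' := by ring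
end
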